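/- arXiv:1701.07421 — 5 statements merged into one kernel-verified Lean document; each statement's English description precedes it below -/
import Mathlib

section
/- If {e₁,...,eₙ} is a Q-orthogonal basis of V, then the set {1} ∪ {e_I : I a nonempty strictly increasing multi-index} is a basis of Cl(V,Q) which is orthogonal with respect to the bilinear form Q̄(x,y) = p(x·c(y)), and Q̄(x,x) ≠ 0 for each basis element x; consequently dim Cl(V,Q) = 2ⁿ and Q̄ is symmetric and nondegenerate. -/
open CliffordAlgebra

section Defs

variable {F V : Type*} [Field F] [AddCommGroup V] [Module F V]

/-- The monomial `e_I` associated to a multi-index `I`, realized as a finite set of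
indices multiplied in increasing order (with `e_∅ = 1`). -/
noncomputable def eI (Qf : QuadraticForm F V) {n : ℕ} (b : Module.Basis (Fin n) F V)
    (s : Finset (Fin n)) : CliffordAlgebra Qf :=
  ((s.sort (· ≤ ·)).map fun i => ι Qf (b i)).prod

/-- The conjugation anti-automorphism `c = α ∘ τ` of the Clifford algebra. -/
noncomputable def cconj (Qf : QuadraticForm F V) :
    CliffordAlgebra Qf →ₗ[F] CliffordAlgebra Qf :=
  involute.toLinearMap ∘ₗ (reverse (Q := Qf))

/-- The canonical bilinear form `Q̄(x,y) = p(x · c(y))`, where `p` is the scalar-component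
projection determined by a monomial basis `bas` (indexed by multi-indices, with
`bas s = e_s`, in particular `bas ∅ = 1`). -/
noncomputable def Qbar {Qf : QuadraticForm F V} {n : ℕ}
    (bas : Module.Basis (Finset (Fin n)) F (CliffordAlgebra Qf))
    (x y : CliffordAlgebra Qf) : F :=
  bas.coord ∅ (x * cconj Qf y)

/-- The Lie algebra `G = {ξ : c(ξ) = -ξ}` of infinitesimal isometries, as a submodule. -/
noncomputable def Gsub (Qf : QuadraticForm F V) : Submodule F (CliffordAlgebra Qf) :=
  LinearMap.ker (cconj Qf + LinearMap.id)

end Defs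


open scoped symmDiff

section CA5Mul
variable {F A : Type*} [Field F] [Ring A] [Algebra F A] {n : ℕ}

namespace CA5

/-- the monomial product over a sorted finset, for a general family `f`. -/
noncomputable def Pw (f : Fin n → A) (s : Finset (Fin n)) : A :=
  ((s.sort (· ≤ ·)).map f).prod

lemma Pw_empty (f : Fin n → A) : Pw f ∅ = 1 := by simp [Pw]

lemma Pw_single (f : Fin n → A) (i : Fin n) : Pw f {i} = f i := by simp [Pw]

lemma singleton_symmDiff_of_not_mem {i : Fin n} {u : Finset (Fin n)} (h : i ∉ u) :
    ({i} : Finset (Fin n)) ∆ u = insert i u := by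
  ext j
  simp only [Finset.mem_symmDiff, Finset.mem_singleton, Finset.mem_insert]
  constructor
  · rintro (⟨rfl, -⟩ | ⟨h1, h2⟩) <;> tauto
  · rintro (rfl | hj)
    · exact Or.inl ⟨rfl, h⟩
    · exact Or.inr ⟨hj, fun hh => h (hh ▸ hj)⟩

lemma singleton_symmDiff_of_mem {i : Fin n} {u : Finset (Fin n)} (h : i ∈ u) :
    ({i} : Finset (Fin n)) ∆ u = u.erase i := by
  ext j
  simp only [Finset.mem_symmDiff, Finset.mem_singleton, Finset.mem_erase]
  constructor
  · rintro (⟨rfl, hh⟩ | ⟨h1, h2⟩)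
    · exact absurd h hh
    · exact ⟨h2, h1⟩
  · rintro ⟨h1, h2⟩; exact Or.inr ⟨h2, h1⟩

lemma move (f : Fin n → A) (hanti : ∀ i j : Fin n, i ≠ j → f i * f j = -(f j * f i)) (i : Fin n) (l : List (Fin n)) (hl : i ∉ l) :
    f i * (l.map f).prod = ((-1:F)^l.length) • ((l.map f).prod * f i) := by
  induction l with
  | nil => simp
  | cons j l ih =>
    have hij : i ≠ j := fun hh => hl (hh ▸ List.mem_cons_self (a := j) (l := l))
    have ih' := ih (fun hh => hl (List.mem_cons_of_mem _ hh))
    simp only [List.map_cons, List.prod_cons, List.length_cons]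
    calc f i * (f j * (l.map f).prod) = (f i * f j) * (l.map f).prod := by rw [mul_assoc]
      _ = -((f j * f i) * (l.map f).prod) := by rw [hanti i j hij]; simp
      _ = -(f j * (f i * (l.map f).prod)) := by rw [mul_assoc]
      _ = -(f j * (((-1:F)^l.length) • ((l.map f).prod * f i))) := by rw [ih']
      _ = ((-1:F)^(l.length+1)) • (f j * (l.map f).prod * f i) := by
            rw [mul_smul_comm, pow_succ]
            simp [mul_assoc, mul_smul]

lemma perm_prod (f : Fin n → A) (hanti : ∀ i j : Fin n, i ≠ j → f i * f j = -(f j * f i)) : ∀ {l₁ l₂ : List (Fin n)}, l₁.Perm l₂ →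
    ∃ c : F, c ≠ 0 ∧ (l₁.map f).prod = c • (l₂.map f).prod := by
  intro l₁ l₂ h
  induction h with
  | nil => exact ⟨1, one_ne_zero, by simp⟩
  | cons x h ih =>
      obtain ⟨c, hc, he⟩ := ih
      exact ⟨c, hc, by simp [he, mul_smul_comm]⟩
  | swap x y l =>
      by_cases hxy : x = y
      · exact ⟨1, one_ne_zero, by simp [hxy]⟩
      · refine ⟨-1, by norm_num, ?_⟩
        simp only [List.map_cons, List.prod_cons, ← mul_assoc]
        rw [hanti y x (Ne.symm hxy)]
        simp
  | trans h1 h2 ih1 ih2 =>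
      obtain ⟨c1, hc1, he1⟩ := ih1
      obtain ⟨c2, hc2, he2⟩ := ih2
      exact ⟨c1 * c2, mul_ne_zero hc1 hc2, by rw [he1, he2, smul_smul]⟩

lemma prod_eq_Pw (f : Fin n → A) (hanti : ∀ i j : Fin n, i ≠ j → f i * f j = -(f j * f i)) {l : List (Fin n)} (hl : l.Nodup) :
    ∃ c : F, c ≠ 0 ∧ (l.map f).prod = c • Pw f l.toFinset := by
  refine perm_prod f hanti (List.perm_of_nodup_nodup_toFinset_eq hl (l.toFinset.sort_nodup _) ?_)
  rw [Finset.sort_toFinset]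

lemma step (f : Fin n → A) (hanti : ∀ i j : Fin n, i ≠ j → f i * f j = -(f j * f i))
    (q : Fin n → F) (hsq : ∀ i, f i * f i = algebraMap F A (q i)) (hq : ∀ i, q i ≠ 0)
    (i : Fin n) (u : Finset (Fin n)) :
    ∃ c : F, c ≠ 0 ∧ f i * Pw f u = c • Pw f ({i} ∆ u) := by
  have hnd : (u.sort (· ≤ ·)).Nodup := u.sort_nodup _
  by_cases hi : i ∈ u
  · -- extract the i
    obtain ⟨l₁, l₂, hsplit⟩ := List.append_of_mem ((Finset.mem_sort (α := Fin n) (· ≤ ·)).2 hi)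
    rw [hsplit] at hnd
    have h1 : l₁.Nodup ∧ (i :: l₂).Nodup ∧ l₁.Disjoint (i :: l₂) := by
      rw [List.nodup_append] at hnd
      exact ⟨hnd.1, hnd.2.1, fun a ha hb => hnd.2.2 a ha a hb rfl⟩
    have hil₁ : i ∉ l₁ := fun hh => h1.2.2 hh List.mem_cons_self
    have hil₂ : i ∉ l₂ := (List.nodup_cons.1 h1.2.1).1
    have hl₂ : l₂.Nodup := (List.nodup_cons.1 h1.2.1).2
    have happ : (l₁ ++ l₂).Nodup := by
      rw [List.nodup_append]
      exact ⟨h1.1, hl₂, fun a ha b hb hab => h1.2.2 ha (List.mem_cons_of_mem _ (hab ▸ hb))⟩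
    obtain ⟨c, hc, hce⟩ := prod_eq_Pw (F := F) f hanti happ
    have htf : (l₁ ++ l₂).toFinset = {i} ∆ u := by
      rw [singleton_symmDiff_of_mem hi]
      ext j
      simp only [List.toFinset_append, Finset.mem_union, List.mem_toFinset, Finset.mem_erase]
      constructor
      · rintro (hj | hj)
        · refine ⟨fun hh => hil₁ (hh ▸ hj), ?_⟩
          rw [← Finset.mem_sort (α := Fin n) (· ≤ ·), hsplit]
          exact List.mem_append_left _ hj
        · refine ⟨fun hh => hil₂ (hh ▸ hj), ?_⟩
          rw [← Finset.mem_sort (α := Fin n) (· ≤ ·), hsplit]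
          exact List.mem_append_right _ (List.mem_cons_of_mem _ hj)
      · rintro ⟨hne, hj⟩
        rw [← Finset.mem_sort (α := Fin n) (· ≤ ·), hsplit] at hj
        rcases List.mem_append.1 hj with hj | hj
        · exact Or.inl hj
        · rcases List.mem_cons.1 hj with rfl | hj
          · exact absurd rfl hne
          · exact Or.inr hj
    refine ⟨((-1:F)^l₁.length * q i) * c,
      mul_ne_zero (mul_ne_zero (pow_ne_zero _ (by norm_num)) (hq i)) hc, ?_⟩
    have : f i * Pw f u
        = ((-1:F)^l₁.length * q i) • ((l₁ ++ l₂).map f).prod := by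
      rw [Pw, hsplit]
      simp only [List.map_append, List.map_cons, List.prod_append, List.prod_cons]
      rw [← mul_assoc, move (F := F) f hanti i l₁ hil₁]
      rw [smul_mul_assoc, mul_assoc, ← mul_assoc (f i) (f i), hsq i]
      rw [← Algebra.smul_def, mul_smul_comm, smul_smul, ← List.prod_append, ← List.map_append]
    rw [this, hce, smul_smul, ← htf]
  · -- i ∉ u : just a longer word
    have hnd' : (i :: u.sort (· ≤ ·)).Nodup :=
      List.nodup_cons.2 ⟨fun hh => hi ((Finset.mem_sort _).1 hh), hnd⟩
    obtain ⟨c, hc, hce⟩ := prod_eq_Pw (F := F) f hanti hnd'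
    refine ⟨c, hc, ?_⟩
    have htf : (i :: u.sort (· ≤ ·)).toFinset = {i} ∆ u := by
      rw [singleton_symmDiff_of_not_mem hi, List.toFinset_cons, Finset.sort_toFinset]
    rw [← htf, ← hce]
    simp [Pw]

lemma Pw_list_mul (f : Fin n → A) (hanti : ∀ i j : Fin n, i ≠ j → f i * f j = -(f j * f i))
    (q : Fin n → F) (hsq : ∀ i, f i * f i = algebraMap F A (q i)) (hq : ∀ i, q i ≠ 0)
    (l : List (Fin n)) (hl : l.Nodup) (t : Finset (Fin n)) :
    ∃ c : F, c ≠ 0 ∧ (l.map f).prod * Pw f t = c • Pw f (l.toFinset ∆ t) := by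
  induction l with
  | nil =>
      refine ⟨1, one_ne_zero, ?_⟩
      have h0 : ([] : List (Fin n)).toFinset ∆ t = t := by
        simp [← Finset.bot_eq_empty, bot_symmDiff]
      rw [h0]
      simp
  | cons i l ih =>
    obtain ⟨hi, hl'⟩ := List.nodup_cons.1 hl
    obtain ⟨c, hc, hce⟩ := ih hl'
    obtain ⟨c', hc', hce'⟩ := step f hanti q hsq hq i (l.toFinset ∆ t)
    refine ⟨c * c', mul_ne_zero hc hc', ?_⟩
    have hts : {i} ∆ (l.toFinset ∆ t) = (i :: l).toFinset ∆ t := by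
      rw [← symmDiff_assoc, List.toFinset_cons,
        singleton_symmDiff_of_not_mem (by simpa using hi)]
    simp only [List.map_cons, List.prod_cons, mul_assoc, hce, mul_smul_comm, hce', hts]
    rw [smul_smul]

lemma Pw_mul_Pw (f : Fin n → A) (hanti : ∀ i j : Fin n, i ≠ j → f i * f j = -(f j * f i))
    (q : Fin n → F) (hsq : ∀ i, f i * f i = algebraMap F A (q i)) (hq : ∀ i, q i ≠ 0)
    (s t : Finset (Fin n)) :
    ∃ c : F, c ≠ 0 ∧ Pw f s * Pw f t = c • Pw f (s ∆ t) := by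
  obtain ⟨c, hc, hce⟩ := Pw_list_mul f hanti q hsq hq (s.sort (· ≤ ·)) (s.sort_nodup _) t
  rw [Finset.sort_toFinset] at hce
  exact ⟨c, hc, hce⟩

end CA5
end CA5Mul

section CA5Rep
variable {F : Type*} [Field F] {n : ℕ}

namespace CA5

/-- sign-and-scale coefficient for the spinor-like representation. -/
def coefR (q : Fin n → F) (i : Fin n) (s : Finset (Fin n)) : F :=
  (if i ∈ s then q i else 1) * (-1)^((s.filter (· < i)).card)

/-- the action of the `i`-th generator on `Finset (Fin n) →₀ F`. -/
noncomputable def rho (q : Fin n → F) (i : Fin n) :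
    (Finset (Fin n) →₀ F) →ₗ[F] (Finset (Fin n) →₀ F) :=
  Finsupp.lsum F fun s => coefR q i s • Finsupp.lsingle ({i} ∆ s)

variable (q : Fin n → F)

lemma rho_single (i : Fin n) (s : Finset (Fin n)) (a : F) :
    rho q i (Finsupp.single s a) = coefR q i s • Finsupp.single ({i} ∆ s) a := by
  simp [rho]

lemma coefR_ne_zero (hq : ∀ i, q i ≠ 0) (i : Fin n) (s : Finset (Fin n)) :
    coefR q i s ≠ 0 := by
  unfold coefR
  apply mul_ne_zero
  · split <;> simp [hq i]
  · exact pow_ne_zero _ (by norm_num)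

lemma filter_lt_symmDiff_self (i : Fin n) (s : Finset (Fin n)) :
    (({i} ∆ s).filter (· < i)) = s.filter (· < i) := by
  ext j
  simp only [Finset.mem_filter, Finset.mem_symmDiff, Finset.mem_singleton]
  constructor
  · rintro ⟨h, hj⟩
    refine ⟨?_, hj⟩
    rcases h with ⟨rfl, -⟩ | ⟨h1, -⟩
    · exact absurd hj (lt_irrefl _)
    · exact h1
  · rintro ⟨h, hj⟩
    exact ⟨Or.inr ⟨h, fun hh => absurd (hh ▸ hj) (lt_irrefl _)⟩, hj⟩

lemma mem_symmDiff_singleton_self (i : Fin n) (s : Finset (Fin n)) :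
    i ∈ {i} ∆ s ↔ i ∉ s := by
  simp [Finset.mem_symmDiff]

lemma coefR_mul_self (i : Fin n) (s : Finset (Fin n)) :
    coefR q i ({i} ∆ s) * coefR q i s = q i := by
  set k := (s.filter (· < i)).card with hk
  have hsq : ((-1:F)^k) * ((-1:F)^k) = 1 := by
    rw [← pow_add, Even.neg_one_pow ⟨k, rfl⟩]
  unfold coefR
  rw [filter_lt_symmDiff_self, ← hk]
  rcases Classical.em (i ∈ s) with h | h
  · have h2 : i ∉ {i} ∆ s := by simp [Finset.mem_symmDiff, h]
    rw [if_pos h, if_neg h2]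
    calc (1 * (-1:F)^k) * (q i * (-1)^k) = q i * ((-1:F)^k * (-1)^k) := by ring
      _ = q i := by rw [hsq, mul_one]
  · have h2 : i ∈ {i} ∆ s := (mem_symmDiff_singleton_self i s).2 h
    rw [if_neg h, if_pos h2]
    calc (q i * (-1:F)^k) * (1 * (-1)^k) = q i * ((-1:F)^k * (-1)^k) := by ring
      _ = q i := by rw [hsq, mul_one]

lemma rho_sq (i : Fin n) :
    rho q i * rho q i = algebraMap F (Module.End F (Finset (Fin n) →₀ F)) (q i) := by
  apply Finsupp.lhom_ext
  intro s a
  rw [Module.End.mul_apply, rho_single, map_smul, rho_single,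
    symmDiff_symmDiff_cancel_left, smul_smul, mul_comm, coefR_mul_self,
    Module.algebraMap_end_apply]

lemma coefR_symmDiff_lt {i j : Fin n} (hij : i < j) (s : Finset (Fin n)) :
    coefR q i ({j} ∆ s) = coefR q i s := by
  unfold coefR
  have h1 : (i ∈ {j} ∆ s) = (i ∈ s) := by
    simp only [Finset.mem_symmDiff, Finset.mem_singleton, eq_iff_iff]
    constructor
    · rintro (⟨rfl, -⟩ | ⟨h, -⟩)
      · exact absurd hij (lt_irrefl _)
      · exact h
    · intro h
      exact Or.inr ⟨h, fun hh => absurd (hh ▸ hij) (lt_irrefl _)⟩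
  have h2 : (({j} ∆ s).filter (· < i)) = s.filter (· < i) := by
    ext k
    simp only [Finset.mem_filter, Finset.mem_symmDiff, Finset.mem_singleton]
    constructor
    · rintro ⟨⟨rfl, -⟩ | ⟨h, -⟩, hk⟩
      · exact absurd (hk.trans hij) (lt_irrefl _)
      · exact ⟨h, hk⟩
    · rintro ⟨h, hk⟩
      exact ⟨Or.inr ⟨h, fun hh => absurd (hk.trans hij) (hh ▸ lt_irrefl _)⟩, hk⟩
  simp only [h1, h2]

lemma coefR_symmDiff_gt {i j : Fin n} (hij : i < j) (s : Finset (Fin n)) :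
    coefR q j ({i} ∆ s) = -coefR q j s := by
  unfold coefR
  have h1 : (j ∈ {i} ∆ s) = (j ∈ s) := by
    simp only [Finset.mem_symmDiff, Finset.mem_singleton, eq_iff_iff]
    constructor
    · rintro (⟨rfl, -⟩ | ⟨h, -⟩)
      · exact absurd hij (lt_irrefl _)
      · exact h
    · intro h
      exact Or.inr ⟨h, fun hh => absurd (hh ▸ hij) (lt_irrefl _)⟩
  simp only [h1]
  have key : ((-1:F))^((({i} ∆ s).filter (· < j)).card) = -(-1)^((s.filter (· < j)).card) := by
    rcases Classical.em (i ∈ s) with h | h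
    · have hmem : i ∈ s.filter (· < j) := Finset.mem_filter.2 ⟨h, hij⟩
      have hset : ({i} ∆ s).filter (· < j) = (s.filter (· < j)).erase i := by
        ext k
        simp only [Finset.mem_filter, Finset.mem_symmDiff, Finset.mem_singleton,
          Finset.mem_erase]
        constructor
        · rintro ⟨⟨rfl, hk⟩ | ⟨h1, h2⟩, hkj⟩
          · exact absurd h hk
          · exact ⟨h2, h1, hkj⟩
        · rintro ⟨h1, h2, h3⟩
          exact ⟨Or.inr ⟨h2, h1⟩, h3⟩
      rw [hset]
      have hcard : ((s.filter (· < j)).erase i).card + 1 = (s.filter (· < j)).card :=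
        Finset.card_erase_add_one hmem
      rw [← hcard, pow_succ]
      ring
    · have hmem : i ∉ s.filter (· < j) := fun hh => h (Finset.mem_filter.1 hh).1
      have hset : ({i} ∆ s).filter (· < j) = insert i (s.filter (· < j)) := by
        ext k
        simp only [Finset.mem_filter, Finset.mem_symmDiff, Finset.mem_singleton,
          Finset.mem_insert]
        constructor
        · rintro ⟨⟨rfl, hk⟩ | ⟨h1, h2⟩, hkj⟩
          · exact Or.inl rfl
          · exact Or.inr ⟨h1, hkj⟩
        · rintro (rfl | ⟨h1, h2⟩)
          · exact ⟨Or.inl ⟨rfl, h⟩, hij⟩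
          · exact ⟨Or.inr ⟨h1, fun hh => h (hh ▸ h1)⟩, h2⟩
      rw [hset, Finset.card_insert_of_notMem hmem, pow_succ]
      ring
  rw [key]
  ring

lemma coefR_anti {i j : Fin n} (hij : i ≠ j) (s : Finset (Fin n)) :
    coefR q i ({j} ∆ s) * coefR q j s = -(coefR q j ({i} ∆ s) * coefR q i s) := by
  rcases lt_or_gt_of_ne hij with h | h
  · rw [coefR_symmDiff_lt q h, coefR_symmDiff_gt q h]
    ring
  · rw [coefR_symmDiff_lt q h, coefR_symmDiff_gt q h]
    ring

lemma rho_anti {i j : Fin n} (hij : i ≠ j) :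
    rho q i * rho q j = -(rho q j * rho q i) := by
  apply Finsupp.lhom_ext
  intro s a
  rw [Module.End.mul_apply, rho_single, map_smul, rho_single, LinearMap.neg_apply,
    Module.End.mul_apply, rho_single, map_smul, rho_single]
  rw [smul_smul, smul_smul, symmDiff_left_comm,
    mul_comm (coefR q j s), coefR_anti q hij, mul_comm (coefR q i s)]
  simp

lemma rho_prod_single (hq : ∀ i, q i ≠ 0) :
    ∀ (l : List (Fin n)), l.Nodup →
      ∃ c : F, c ≠ 0 ∧
        ((l.map (rho q)).prod) (Finsupp.single ∅ 1) = c • Finsupp.single l.toFinset (1:F) := by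
  intro l
  induction l with
  | nil => exact fun _ => ⟨1, one_ne_zero, by simp⟩
  | cons i l ih =>
    intro hl
    obtain ⟨hi, hl'⟩ := List.nodup_cons.1 hl
    obtain ⟨c, hc, hce⟩ := ih hl'
    refine ⟨c * coefR q i l.toFinset, mul_ne_zero hc (coefR_ne_zero q hq i _), ?_⟩
    rw [List.map_cons, List.prod_cons, Module.End.mul_apply, hce, map_smul, rho_single,
      singleton_symmDiff_of_not_mem (by simpa using hi), ← List.toFinset_cons]
    rw [smul_smul]

end CA5
end CA5Rep

section CA5Indep
variable {F V : Type*} [Field F] [AddCommGroup V] [Module F V] {n : ℕ}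

open CliffordAlgebra CA5 in
theorem CA5.eI_linearIndependent (h2 : (2:F) ≠ 0) (Qf : QuadraticForm F V)
    (b : Module.Basis (Fin n) F V) (hq : ∀ i, Qf (b i) ≠ 0)
    (hQsum : ∀ v : V, Qf v = ∑ i, (b.repr v i)^2 * Qf (b i)) :
    LinearIndependent F (eI Qf b) := by
  classical
  set q : Fin n → F := fun i => Qf (b i) with hqdef
  set T : V →ₗ[F] Module.End F (Finset (Fin n) →₀ F) := b.constr F (rho q) with hT
  have hTv : ∀ v : V, T v * T v = algebraMap F (Module.End F (Finset (Fin n) →₀ F)) (Qf v) := by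
    intro v
    have hexp : T v = ∑ i, b.equivFun v i • rho q i := b.constr_apply_fintype F _ v
    set c : Fin n → F := fun i => b.equivFun v i with hcdef
    have hgexp : T v * T v = ∑ i, ∑ j, (c i * c j) • (rho q i * rho q j) := by
      rw [hexp, Finset.sum_mul_sum]
      refine Finset.sum_congr rfl fun i _ => Finset.sum_congr rfl fun j _ => ?_
      rw [smul_mul_smul_comm]
    -- split into diagonal and off-diagonal
    set g : Fin n → Fin n → Module.End F (Finset (Fin n) →₀ F) :=
      fun i j => if i = j then 0 else (c i * c j) • (rho q i * rho q j) with hg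
    have hoff : ∑ i, ∑ j, g i j = 0 := by
      have hanti : ∀ i j, g j i + g i j = 0 := by
        intro i j
        by_cases h : i = j
        · subst h
          simp only [hg, if_pos rfl]
          abel
        · simp only [hg, if_neg h, if_neg (Ne.symm h)]
          rw [rho_anti q (Ne.symm h), mul_comm (c j)]
          module
      have hadd : (∑ i, ∑ j, g i j) + (∑ i, ∑ j, g i j) = 0 := by
        conv_lhs => lhs; rw [Finset.sum_comm]
        rw [← Finset.sum_add_distrib]
        refine Finset.sum_eq_zero fun i _ => ?_
        rw [← Finset.sum_add_distrib]
        refine Finset.sum_eq_zero fun j _ => ?_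
        exact hanti i j
      have h2S : (2:F) • (∑ i, ∑ j, g i j) = 0 := by
        rw [two_smul, hadd]
      exact (smul_eq_zero.1 h2S).resolve_left h2
    have hdiag : T v * T v = ∑ i, (c i * c i) • (rho q i * rho q i) := by
      rw [hgexp]
      have : ∀ i j, (c i * c j) • (rho q i * rho q j)
          = g i j + if i = j then (c i * c i) • (rho q i * rho q i) else 0 := by
        intro i j
        by_cases h : i = j
        · subst h
          simp only [hg, if_pos rfl]
          abel
        · simp only [hg, if_neg h]
          abel
      have hsplit : ∀ i, ∑ j, (c i * c j) • (rho q i * rho q j)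
          = (∑ j, g i j) + (c i * c i) • (rho q i * rho q i) := by
        intro i
        calc ∑ j, (c i * c j) • (rho q i * rho q j)
            = ∑ j, (g i j + if i = j then (c i * c i) • (rho q i * rho q i) else 0) :=
              Finset.sum_congr rfl fun j _ => this i j
          _ = (∑ j, g i j) + ∑ j, (if i = j then (c i * c i) • (rho q i * rho q i) else 0) :=
              Finset.sum_add_distrib
          _ = (∑ j, g i j) + (c i * c i) • (rho q i * rho q i) := by
              rw [Finset.sum_ite_eq, if_pos (Finset.mem_univ i)]
      rw [Finset.sum_congr rfl fun i _ => hsplit i, Finset.sum_add_distrib, hoff, zero_add]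
    rw [hdiag]
    have : ∀ i, (c i * c i) • (rho q i * rho q i) = ((c i)^2 * q i) • (1 : Module.End F (Finset (Fin n) →₀ F)) := by
      intro i
      rw [rho_sq q i, Algebra.algebraMap_eq_smul_one, smul_smul, sq]
    simp_rw [this, ← Finset.sum_smul]
    rw [Algebra.algebraMap_eq_smul_one, hQsum v]
    have hci : (∑ i, (c i)^2 * q i) = ∑ i, (b.repr v i)^2 * Qf (b i) :=
      Finset.sum_congr rfl fun i _ => by rw [hcdef]; simp [Module.Basis.equivFun_apply, hqdef]
    rw [hci]
  set Φ := CliffordAlgebra.lift Qf ⟨T, hTv⟩ with hΦ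
  have hΦι : ∀ i, Φ (ι Qf (b i)) = rho q i := by
    intro i
    rw [hΦ, CliffordAlgebra.lift_ι_apply]
    exact b.constr_basis F _ i
  have hΦeI : ∀ s : Finset (Fin n), Φ (eI Qf b s) = (((s.sort (· ≤ ·)).map (rho q)).prod) := by
    intro s
    rw [eI, map_list_prod, List.map_map]
    congr 1
    rw [List.map_congr_left]
    intro i _
    exact hΦι i
  rw [Fintype.linearIndependent_iff]
  intro g hg t
  have hone : ∀ s : Finset (Fin n), ∃ c : F, c ≠ 0 ∧
      Φ (eI Qf b s) (Finsupp.single ∅ 1) = c • Finsupp.single s (1:F) := by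
    intro s
    obtain ⟨c, hc, hce⟩ := rho_prod_single q hq (s.sort (· ≤ ·)) (s.sort_nodup _)
    refine ⟨c, hc, ?_⟩
    rw [hΦeI, hce, Finset.sort_toFinset]
  choose γ hγ hγe using hone
  have happ : ∑ s : Finset (Fin n), (g s * γ s) • Finsupp.single s (1:F) = 0 := by
    have h0 := congrArg Φ hg
    rw [map_sum, map_zero] at h0
    have h1 := LinearMap.congr_fun h0 (Finsupp.single (∅ : Finset (Fin n)) (1:F))
    rw [LinearMap.sum_apply, LinearMap.zero_apply] at h1
    rw [← h1]
    refine Finset.sum_congr rfl fun s _ => ?_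
    rw [map_smul, LinearMap.smul_apply, hγe s, smul_smul]
  have hcoord := DFunLike.congr_fun happ t
  rw [Finsupp.finset_sum_apply, Finsupp.zero_apply] at hcoord
  have hsum : ∑ s : Finset (Fin n), ((g s * γ s) • Finsupp.single s (1:F)) t = g t * γ t := by
    rw [show ∑ s : Finset (Fin n), ((g s * γ s) • Finsupp.single s (1:F)) t
        = ∑ s : Finset (Fin n), if s = t then g s * γ s else 0 from
      Finset.sum_congr rfl fun s _ => by
        rw [Finsupp.smul_apply, Finsupp.single_apply]
        split <;> simp [smul_eq_mul]]
    rw [Finset.sum_ite_eq' Finset.univ t]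
    simp
  rw [hsum] at hcoord
  exact (mul_eq_zero.1 hcoord).resolve_right (hγ t)
end CA5Indep

theorem stmt5 {F V : Type*} [Field F] [AddCommGroup V] [Module F V]
    [FiniteDimensional F V] (h2 : (2 : F) ≠ 0)
    (B : LinearMap.BilinForm F V)
    (hsymm : ∀ v w : V, B v w = B w v)
    (hnd : ∀ v : V, (∀ w : V, B v w = 0) → v = 0)
    (Qf : QuadraticForm F V) (hQ : ∀ v : V, Qf v = -(B v v))
    {n : ℕ} (b : Module.Basis (Fin n) F V)
    (hortho : ∀ i j : Fin n, i ≠ j → B (b i) (b j) = 0) :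
    ∃ bas : Module.Basis (Finset (Fin n)) F (CliffordAlgebra Qf),
      (∀ s : Finset (Fin n), bas s = eI Qf b s) ∧
      (∀ s t : Finset (Fin n), s ≠ t → Qbar bas (eI Qf b s) (eI Qf b t) = 0) ∧
      (∀ s : Finset (Fin n), Qbar bas (eI Qf b s) (eI Qf b s) ≠ 0) ∧
      Module.finrank F (CliffordAlgebra Qf) = 2 ^ n ∧
      (∀ x y : CliffordAlgebra Qf, Qbar bas x y = Qbar bas y x) ∧
      (∀ x : CliffordAlgebra Qf, (∀ y, Qbar bas x y = 0) → x = 0) := by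
  classical
  set f : Fin n → CliffordAlgebra Qf := fun i => ι Qf (b i) with hf
  set q : Fin n → F := fun i => Qf (b i) with hqdef
  have hPw : ∀ s, eI Qf b s = CA5.Pw f s := fun s => rfl
  -- diagonal entries of B are nonzero
  have hBii : ∀ i, B (b i) (b i) ≠ 0 := by
    intro i h0
    have hz : B (b i) = 0 := b.ext fun j => by
      by_cases hji : j = i
      · rw [hji, h0]; rfl
      · rw [hortho i j (fun hh => hji hh.symm)]; rfl
    exact b.ne_zero i (hnd (b i) fun w => by rw [hz]; rfl)
  have hqne : ∀ i, q i ≠ 0 := by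
    intro i
    rw [hqdef]
    simp only [hQ (b i)]
    simpa using hBii i
  have hsq : ∀ i, f i * f i = algebraMap F (CliffordAlgebra Qf) (q i) := fun i =>
    CliffordAlgebra.ι_sq_scalar Qf (b i)
  -- anticommutation
  have hpolar : ∀ i j : Fin n, i ≠ j → QuadraticMap.polar Qf (b i) (b j) = 0 := by
    intro i j hij
    rw [QuadraticMap.polar, hQ, hQ, hQ]
    have hexp : B (b i + b j) (b i + b j) = B (b i) (b i) + B (b j) (b j) := by
      simp only [map_add, LinearMap.add_apply]
      rw [hortho i j hij, hortho j i (Ne.symm hij)]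
      ring
    rw [hexp]
    ring
  have hanti : ∀ i j : Fin n, i ≠ j → f i * f j = -(f j * f i) := by
    intro i j hij
    have h := CliffordAlgebra.ι_mul_ι_add_swap (Q := Qf) (b i) (b j)
    rw [hpolar i j hij, map_zero] at h
    exact eq_neg_of_add_eq_zero_left h
  -- the quadratic form on coordinates
  have hQsum : ∀ v : V, Qf v = ∑ i, (b.repr v i)^2 * Qf (b i) := by
    intro v
    have hv1 : v = ∑ i, b.repr v i • b i := by
      have h := b.sum_equivFun v
      simp only [b.equivFun_apply] at h
      exact h.symm
    have hBvv : B v v = ∑ i, (b.repr v i)^2 * B (b i) (b i) := by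
      have e2 : ∀ i, B (b i) v = b.repr v i * B (b i) (b i) := by
        intro i
        conv_lhs => rw [hv1]
        rw [map_sum, Finset.sum_eq_single i
          (fun j _ hj => by rw [map_smul, hortho i j (Ne.symm hj), smul_zero])
          (fun h => absurd (Finset.mem_univ i) h), map_smul, smul_eq_mul]
      have e1 : ∀ w, B v w = ∑ i, b.repr v i * B (b i) w := by
        intro w
        conv_lhs => rw [hv1]
        simp only [map_sum, LinearMap.sum_apply, map_smul, LinearMap.smul_apply, smul_eq_mul]
      rw [e1 v]
      refine Finset.sum_congr rfl fun i _ => ?_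
      rw [e2 i]
      ring
    rw [hQ v, hBvv, ← Finset.sum_neg_distrib]
    refine Finset.sum_congr rfl fun i _ => ?_
    rw [hQ (b i)]
    ring
  -- linear independence and spanning
  have hli : LinearIndependent F (eI Qf b) :=
    CA5.eI_linearIndependent h2 Qf b (fun i => hqne i) hQsum
  have hmul : ∀ s t, ∃ c : F, c ≠ 0 ∧
      eI Qf b s * eI Qf b t = c • eI Qf b (s ∆ t) := by
    intro s t
    obtain ⟨c, hc, hce⟩ := CA5.Pw_mul_Pw f hanti q hsq hqne s t
    exact ⟨c, hc, hce⟩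
  have hsp : Submodule.span F (Set.range (eI Qf b)) = ⊤ := by
    set S := Submodule.span F (Set.range (eI Qf b)) with hS
    have hone : (1 : CliffordAlgebra Qf) ∈ S :=
      Submodule.subset_span ⟨∅, CA5.Pw_empty f⟩
    have hSmul : ∀ a ∈ S, ∀ c ∈ S, a * c ∈ S := by
      intro a ha c hc
      have h1 : a * c ∈ S * S := Submodule.mul_mem_mul ha hc
      have hle : S * S ≤ S := by
        rw [hS, Submodule.span_mul_span]
        refine Submodule.span_le.2 ?_
        rintro x ⟨y, ⟨s, rfl⟩, z, ⟨t, rfl⟩, rfl⟩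
        obtain ⟨c', hc', hce⟩ := hmul s t
        show eI Qf b s * eI Qf b t ∈
          (Submodule.span F (Set.range (eI Qf b)) : Set (CliffordAlgebra Qf))
        rw [hce]
        exact Submodule.smul_mem _ _ (Submodule.subset_span ⟨s ∆ t, rfl⟩)
      exact hle h1
    rw [eq_top_iff]
    rintro x -
    induction x using CliffordAlgebra.induction with
    | algebraMap r =>
        rw [Algebra.algebraMap_eq_smul_one]
        exact Submodule.smul_mem _ _ hone
    | ι v =>
        have hv : ι Qf v = ∑ i, b.repr v i • ι Qf (b i) := by
          have hv1 : v = ∑ i, b.repr v i • b i := by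
            have h := b.sum_equivFun v
            simp only [b.equivFun_apply] at h
            exact h.symm
          conv_lhs => rw [hv1]
          rw [map_sum]
          exact Finset.sum_congr rfl fun i _ => map_smul _ _ _
        rw [hv]
        exact Submodule.sum_mem _ fun i _ =>
          Submodule.smul_mem _ _ (Submodule.subset_span ⟨{i}, CA5.Pw_single f i⟩)
    | mul a c ha hc => exact hSmul a ha c hc
    | add a c ha hc => exact Submodule.add_mem _ ha hc
  -- the basis
  refine ⟨Module.Basis.mk hli hsp.ge, ?_⟩
  set bas : Module.Basis (Finset (Fin n)) F (CliffordAlgebra Qf) := Module.Basis.mk hli hsp.ge with hbasdef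
  have hbas : ∀ s, bas s = eI Qf b s := fun s => by rw [hbasdef, Module.Basis.mk_apply]
  have hcoord : ∀ u : Finset (Fin n),
      bas.coord ∅ (eI Qf b u) = if u = ∅ then 1 else 0 := by
    intro u
    rw [← hbas u, Module.Basis.coord_apply, Module.Basis.repr_self, Finsupp.single_apply]
  -- conjugation acts diagonally on monomials
  have hconj : ∀ t, ∃ d : F, d ≠ 0 ∧ cconj Qf (eI Qf b t) = d • eI Qf b t := by
    intro t
    set l := t.sort (· ≤ ·) with hl
    have h1 : eI Qf b t = ((l.map b).map (ι Qf)).prod := by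
      rw [List.map_map]; rfl
    have h2 : reverse (Q := Qf) (eI Qf b t) = ((l.reverse.map b).map (ι Qf)).prod := by
      rw [h1, CliffordAlgebra.reverse_prod_map_ι, ← List.map_reverse, ← List.map_reverse]
    have h3 : cconj Qf (eI Qf b t)
        = (-1:F)^l.length • ((l.reverse.map f).prod) := by
      show involute (reverse (Q := Qf) (eI Qf b t)) = _
      rw [h2, CliffordAlgebra.involute_prod_map_ι, List.map_map]
      simp only [List.length_map, List.length_reverse]
      rfl
    obtain ⟨c, hc, hce⟩ := CA5.perm_prod (F := F) f hanti l.reverse_perm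
    refine ⟨(-1:F)^l.length * c, mul_ne_zero (pow_ne_zero _ (by norm_num)) hc, ?_⟩
    rw [h3, hce, smul_smul]
    rfl
  have hQbar_def : ∀ x y, Qbar bas x y = bas.coord ∅ (x * cconj Qf y) := fun _ _ => rfl
  -- values of Qbar on monomials
  have hQval : ∀ s t, ∃ e : F, e ≠ 0 ∧
      Qbar bas (eI Qf b s) (eI Qf b t) = if s = t then e else 0 := by
    intro s t
    obtain ⟨d, hd, hde⟩ := hconj t
    obtain ⟨c, hc, hce⟩ := hmul s t
    refine ⟨d * c, mul_ne_zero hd hc, ?_⟩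
    rw [hQbar_def, hde, mul_smul_comm, hce, smul_smul, map_smul, smul_eq_mul, hcoord]
    by_cases h : s = t
    · rw [if_pos h, if_pos (by rw [h, symmDiff_self, Finset.bot_eq_empty]), mul_one]
    · rw [if_neg h, if_neg (fun hh => h (by
        have := symmDiff_eq_bot.1 (by rw [← Finset.bot_eq_empty] at hh; exact hh)
        exact this)), mul_zero]
  have hQb0 : ∀ s t, s ≠ t → Qbar bas (eI Qf b s) (eI Qf b t) = 0 := by
    intro s t h
    obtain ⟨e, he, hev⟩ := hQval s t
    rw [hev, if_neg h]
  have hQbd : ∀ s, Qbar bas (eI Qf b s) (eI Qf b s) ≠ 0 := by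
    intro s
    obtain ⟨e, he, hev⟩ := hQval s s
    rw [hev, if_pos rfl]
    exact he
  -- the bilinear map
  set L : CliffordAlgebra Qf →ₗ[F] CliffordAlgebra Qf →ₗ[F] F :=
    ((LinearMap.mul F (CliffordAlgebra Qf)).compl₂ (cconj Qf)).compr₂ (bas.coord ∅) with hLdef
  have hL : ∀ x y, Qbar bas x y = L x y := fun x y => rfl
  have hLsymm : L = L.flip := by
    refine LinearMap.ext_basis bas bas fun s t => ?_
    rw [LinearMap.flip_apply, ← hL, ← hL, hbas, hbas]
    by_cases h : s = t
    · rw [h]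
    · rw [hQb0 s t h, hQb0 t s (Ne.symm h)]
  have hsymmQ : ∀ x y, Qbar bas x y = Qbar bas y x := by
    intro x y
    rw [hL x y, hL y x]
    conv_rhs => rw [hLsymm]
    rw [LinearMap.flip_apply]
  -- nondegeneracy
  have hnondeg : ∀ x : CliffordAlgebra Qf, (∀ y, Qbar bas x y = 0) → x = 0 := by
    intro x hx
    have hrep : ∀ t, bas.repr x t = 0 := by
      intro t
      have heq : L.flip (bas t) = Qbar bas (eI Qf b t) (eI Qf b t) • bas.coord t := by
        refine bas.ext fun s => ?_
        rw [LinearMap.flip_apply, LinearMap.smul_apply, Module.Basis.coord_apply, Module.Basis.repr_self,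
          ← hL, hbas, hbas, Finsupp.single_apply, smul_eq_mul]
        by_cases h : s = t
        · rw [if_pos h, mul_one, h]
        · rw [if_neg h, mul_zero, hQb0 s t h]
      have h1 := LinearMap.congr_fun heq x
      rw [LinearMap.flip_apply, LinearMap.smul_apply, Module.Basis.coord_apply, smul_eq_mul] at h1
      have h2 : L x (bas t) = 0 := by rw [← hL]; exact hx (bas t)
      rw [h2] at h1
      exact (mul_eq_zero.1 h1.symm).resolve_left (hQbd t)
    refine bas.ext_elem fun t => ?_
    rw [hrep t, map_zero]
    rfl
  refine ⟨hbas, hQb0, hQbd, ?_, hsymmQ, hnondeg⟩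
  rw [Module.finrank_eq_card_basis bas, Fintype.card_finset, Fintype.card_fin]
end

section
/- For all x, y ∈ Cl(V,Q), p(xy) = p(yx), where p is the projection onto the scalar component (with respect to the basis {e_I} arising from a Q-orthogonal basis of V). -/
open CliffordAlgebra

section Aux

variable {F V : Type*} [Field F] [AddCommGroup V] [Module F V]
  {Qf : QuadraticForm F V} {n : ℕ} {b : Module.Basis (Fin n) F V}
  (hac : ∀ i j : Fin n, i ≠ j → ι Qf (b i) * ι Qf (b j) = -(ι Qf (b j) * ι Qf (b i)))

lemma eI_empty : eI Qf b (∅ : Finset (Fin n)) = 1 := by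
  simp [eI, Finset.sort_empty]

lemma eI_singleton (i : Fin n) : eI Qf b {i} = ι Qf (b i) := by
  simp [eI, Finset.sort_singleton]

lemma eI_insert {a : Fin n} {t : Finset (Fin n)} (ha : a ∉ t) (hle : ∀ x ∈ t, a ≤ x) :
    eI Qf b (insert a t) = ι Qf (b a) * eI Qf b t := by
  unfold eI
  rw [Finset.sort_insert _ hle ha, List.map_cons, List.prod_cons]

include hac in
lemma key_ins : ∀ s : Finset (Fin n), ∀ i ∉ s, ∃ c : F,
    ι Qf (b i) * eI Qf b s = c • eI Qf b (insert i s) := by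
  intro s
  induction s using Finset.strongInduction with
  | _ s IH =>
    intro i hi
    rcases s.eq_empty_or_nonempty with rfl | hs
    · exact ⟨1, by rw [eI_empty, Finset.insert_empty, eI_singleton, mul_one, one_smul]⟩
    · set a := s.min' hs with ha_def
      have ha : a ∈ s := s.min'_mem hs
      have hia : i ≠ a := fun h => hi (h ▸ ha)
      have hmin : ∀ x ∈ s.erase a, a ≤ x := fun x hx =>
        ha_def ▸ s.min'_le x (Finset.mem_of_mem_erase hx)
      have hsplit : eI Qf b s = ι Qf (b a) * eI Qf b (s.erase a) := by
        conv_lhs => rw [← Finset.insert_erase ha]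
        exact eI_insert (Finset.notMem_erase a s) hmin
      rcases lt_or_gt_of_ne hia with hlt | hgt
      · -- i < a : i is below everything in s
        refine ⟨1, ?_⟩
        rw [one_smul, eI_insert hi fun x hx =>
          le_of_lt (lt_of_lt_of_le (ha_def ▸ hlt) (s.min'_le x hx))]
      · -- a < i
        have hi' : i ∉ s.erase a := fun h => hi (Finset.mem_of_mem_erase h)
        obtain ⟨c, hc⟩ := IH (s.erase a) (Finset.erase_ssubset ha) i hi'
        refine ⟨-c, ?_⟩
        have hanot : a ∉ insert i (s.erase a) := by
          simp only [Finset.mem_insert]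
          rintro (rfl | h)
          · exact hia rfl
          · exact Finset.notMem_erase a s h
        have hale : ∀ x ∈ insert i (s.erase a), a ≤ x := by
          intro x hx
          rcases Finset.mem_insert.mp hx with rfl | h
          · exact le_of_lt hgt
          · exact hmin x h
        calc ι Qf (b i) * eI Qf b s
            = ι Qf (b i) * (ι Qf (b a) * eI Qf b (s.erase a)) := by rw [hsplit]
          _ = -(ι Qf (b a) * ι Qf (b i)) * eI Qf b (s.erase a) := by
              rw [← mul_assoc, hac i a hia]
          _ = -(ι Qf (b a) * (ι Qf (b i) * eI Qf b (s.erase a))) := by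
              rw [neg_mul, mul_assoc]
          _ = -(ι Qf (b a) * (c • eI Qf b (insert i (s.erase a)))) := by rw [hc]
          _ = (-c) • (ι Qf (b a) * eI Qf b (insert i (s.erase a))) := by
              rw [mul_smul_comm, neg_smul]
          _ = (-c) • eI Qf b (insert a (insert i (s.erase a))) := by
              rw [eI_insert hanot hale]
          _ = (-c) • eI Qf b (insert i s) := by
              rw [Finset.insert_comm, Finset.insert_erase ha]

include hac in
lemma key_er : ∀ s : Finset (Fin n), ∀ i ∈ s, ∃ c : F,
    ι Qf (b i) * eI Qf b s = c • eI Qf b (s.erase i) := by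
  intro s
  induction s using Finset.strongInduction with
  | _ s IH =>
    intro i hi
    have hs : s.Nonempty := ⟨i, hi⟩
    obtain ⟨a, ha_def⟩ : ∃ a, a = s.min' hs := ⟨_, rfl⟩
    have ha : a ∈ s := ha_def ▸ s.min'_mem hs
    have hmin : ∀ x ∈ s.erase a, a ≤ x := fun x hx =>
      ha_def ▸ s.min'_le x (Finset.mem_of_mem_erase hx)
    have hsplit : eI Qf b s = ι Qf (b a) * eI Qf b (s.erase a) := by
      conv_lhs => rw [← Finset.insert_erase ha]
      exact eI_insert (Finset.notMem_erase a s) hmin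
    by_cases hia : i = a
    · refine ⟨Qf (b i), ?_⟩
      rw [hsplit, hia, ← mul_assoc, ι_sq_scalar, ← Algebra.smul_def, ← hia]
    · have hi' : i ∈ s.erase a := Finset.mem_erase.mpr ⟨hia, hi⟩
      obtain ⟨c, hc⟩ := IH (s.erase a) (Finset.erase_ssubset ha) i hi'
      refine ⟨-c, ?_⟩
      have hanot : a ∉ (s.erase a).erase i := fun h =>
        Finset.notMem_erase a s (Finset.mem_of_mem_erase h)
      have hale : ∀ x ∈ (s.erase a).erase i, a ≤ x := fun x hx =>
        hmin x (Finset.mem_of_mem_erase hx)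
      calc ι Qf (b i) * eI Qf b s
          = ι Qf (b i) * (ι Qf (b a) * eI Qf b (s.erase a)) := by rw [hsplit]
        _ = -(ι Qf (b a) * ι Qf (b i)) * eI Qf b (s.erase a) := by
            rw [← mul_assoc, hac i a hia]
        _ = -(ι Qf (b a) * (ι Qf (b i) * eI Qf b (s.erase a))) := by
            rw [neg_mul, mul_assoc]
        _ = -(ι Qf (b a) * (c • eI Qf b ((s.erase a).erase i))) := by rw [hc]
        _ = (-c) • (ι Qf (b a) * eI Qf b ((s.erase a).erase i)) := by
            rw [mul_smul_comm, neg_smul]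
        _ = (-c) • eI Qf b (insert a ((s.erase a).erase i)) := by
            rw [eI_insert hanot hale]
        _ = (-c) • eI Qf b (s.erase i) := by
            have hcomm : (s.erase a).erase i = (s.erase i).erase a := by
              ext x; simp only [Finset.mem_erase]; tauto
            rw [hcomm, Finset.insert_erase
               (Finset.mem_erase.mpr ⟨fun h => hia h.symm, ha⟩)]

include hac in
lemma prod_eq : ∀ l : List (Fin n), l.Nodup → ∃ c : F,
    (l.map fun i => ι Qf (b i)).prod = c • eI Qf b l.toFinset := by
  intro l
  induction l with
  | nil => exact fun _ => ⟨1, by simp [eI_empty]⟩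
  | cons a l IHl =>
    intro hnd
    obtain ⟨hal, hl⟩ := List.nodup_cons.mp hnd
    obtain ⟨c, hc⟩ := IHl hl
    have hat : a ∉ l.toFinset := fun h => hal (List.mem_toFinset.mp h)
    obtain ⟨c', hc'⟩ := key_ins hac l.toFinset a hat
    refine ⟨c * c', ?_⟩
    rw [List.map_cons, List.prod_cons, hc, mul_smul_comm, hc', List.toFinset_cons, smul_smul]

include hac in
lemma rev_eI (s : Finset (Fin n)) : ∃ c : F, reverse (Q := Qf) (eI Qf b s) = c • eI Qf b s := by
  obtain ⟨c, hc⟩ := prod_eq hac ((s.sort (· ≤ ·)).reverse)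
    (List.nodup_reverse.mpr (s.sort_nodup _))
  refine ⟨c, ?_⟩
  have h1 : eI Qf b s = (((s.sort (· ≤ ·)).map b).map (ι Qf)).prod := by
    simp [eI, List.map_map, Function.comp_def]
  have h2 : ((s.sort (· ≤ ·)).map b).reverse.map (ι Qf)
      = ((s.sort (· ≤ ·)).reverse.map fun i => ι Qf (b i)) := by
    rw [← List.map_reverse, List.map_map]; rfl
  conv_lhs => rw [h1, reverse_prod_map_ι, ← List.map_reverse, h2, hc]
  rw [List.toFinset_reverse, Finset.sort_toFinset]

end Aux

section Aux2

variable {F V : Type*} [Field F] [AddCommGroup V] [Module F V]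
  {Qf : QuadraticForm F V} {n : ℕ} {b : Module.Basis (Fin n) F V}
  (hac : ∀ i j : Fin n, i ≠ j → ι Qf (b i) * ι Qf (b j) = -(ι Qf (b j) * ι Qf (b i)))
  (bas : Module.Basis (Finset (Fin n)) F (CliffordAlgebra Qf))
  (hbas : ∀ s : Finset (Fin n), bas s = eI Qf b s)

lemma coord_bas_ne {s : Finset (Fin n)} (hs : s ≠ ∅) : bas.coord ∅ (bas s) = 0 := by
  rw [Module.Basis.coord_apply, Module.Basis.repr_self, Finsupp.single_eq_of_ne hs.symm]

include hac hbas in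
lemma coord_reverse (z : CliffordAlgebra Qf) :
    bas.coord ∅ (reverse (Q := Qf) z) = bas.coord ∅ z := by
  have h : (bas.coord ∅) ∘ₗ (reverse (Q := Qf)) = bas.coord ∅ := by
    apply bas.ext
    intro s
    rcases eq_or_ne s ∅ with rfl | hs
    · rw [LinearMap.comp_apply, hbas ∅, eI_empty]
      simp
    · obtain ⟨c, hc⟩ := rev_eI hac s
      rw [LinearMap.comp_apply, hbas s, hc, ← hbas s, map_smul, coord_bas_ne bas hs, smul_zero]
  exact LinearMap.congr_fun h z

include hac hbas in
lemma gen_coord (j : Fin n) (s : Finset (Fin n)) :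
    bas.coord ∅ (eI Qf b s * ι Qf (b j)) = bas.coord ∅ (ι Qf (b j) * eI Qf b s) := by
  rcases eq_or_ne s {j} with rfl | hne
  · rw [eI_singleton]
  · obtain ⟨u, c, hu0, hc⟩ : ∃ (u : Finset (Fin n)) (c : F), u ≠ ∅ ∧
        ι Qf (b j) * eI Qf b s = c • eI Qf b u := by
      by_cases hj : j ∈ s
      · obtain ⟨c, hc⟩ := key_er hac s j hj
        refine ⟨s.erase j, c, fun h => ?_, hc⟩
        rcases (Finset.erase_eq_empty_iff s j).mp h with rfl | rfl
        · exact Finset.notMem_empty j hj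
        · exact hne rfl
      · obtain ⟨c, hc⟩ := key_ins hac s j hj
        exact ⟨insert j s, c, Finset.insert_ne_empty _ _, hc⟩
    have hR : bas.coord ∅ (ι Qf (b j) * eI Qf b s) = 0 := by
      rw [hc, ← hbas u, map_smul, coord_bas_ne bas hu0, smul_zero]
    have hL : bas.coord ∅ (eI Qf b s * ι Qf (b j)) = 0 := by
      obtain ⟨c', hc'⟩ := rev_eI hac s
      have hrev : reverse (Q := Qf) (eI Qf b s * ι Qf (b j)) = (c' * c) • eI Qf b u := by
        rw [reverse.map_mul, reverse_ι, hc', mul_smul_comm, hc, smul_smul]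
      rw [← coord_reverse hac bas hbas, hrev, ← hbas u, map_smul, coord_bas_ne bas hu0,
        smul_zero]
    rw [hL, hR]

include hac hbas in
lemma gen_coord_v (s : Finset (Fin n)) (v : V) :
    bas.coord ∅ (eI Qf b s * ι Qf v) = bas.coord ∅ (ι Qf v * eI Qf b s) := by
  have h : (bas.coord ∅) ∘ₗ (LinearMap.mulLeft F (eI Qf b s)) ∘ₗ (ι Qf)
      = (bas.coord ∅) ∘ₗ (LinearMap.mulRight F (eI Qf b s)) ∘ₗ (ι Qf) := by
    apply b.ext
    intro j
    simpa using gen_coord hac bas hbas j s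
  simpa using LinearMap.congr_fun h v

include hac hbas in
lemma gen_coord_x (v : V) (x : CliffordAlgebra Qf) :
    bas.coord ∅ (x * ι Qf v) = bas.coord ∅ (ι Qf v * x) := by
  have h : (bas.coord ∅) ∘ₗ (LinearMap.mulRight F (ι Qf v))
      = (bas.coord ∅) ∘ₗ (LinearMap.mulLeft F (ι Qf v)) := by
    apply bas.ext
    intro s
    simpa [hbas s] using gen_coord_v hac bas hbas s v
  simpa using LinearMap.congr_fun h x

end Aux2

theorem stmt8 {F V : Type*} [Field F] [AddCommGroup V] [Module F V]
    [FiniteDimensional F V] (h2 : (2 : F) ≠ 0)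
    (B : LinearMap.BilinForm F V)
    (hsymm : ∀ v w : V, B v w = B w v)
    (hnd : ∀ v : V, (∀ w : V, B v w = 0) → v = 0)
    (Qf : QuadraticForm F V) (hQ : ∀ v : V, Qf v = -(B v v))
    {n : ℕ} (b : Module.Basis (Fin n) F V)
    (hortho : ∀ i j : Fin n, i ≠ j → B (b i) (b j) = 0)
    (bas : Module.Basis (Finset (Fin n)) F (CliffordAlgebra Qf))
    (hbas : ∀ s : Finset (Fin n), bas s = eI Qf b s) :
    ∀ x y : CliffordAlgebra Qf, bas.coord ∅ (x * y) = bas.coord ∅ (y * x) := by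
  have hpolar : ∀ i j : Fin n, i ≠ j → QuadraticMap.polar Qf (b i) (b j) = 0 := by
    intro i j hij
    rw [QuadraticMap.polar, hQ, hQ, hQ]
    simp only [map_add, LinearMap.add_apply, hortho i j hij, hortho j i hij.symm]
    ring
  have hac : ∀ i j : Fin n, i ≠ j →
      ι Qf (b i) * ι Qf (b j) = -(ι Qf (b j) * ι Qf (b i)) := by
    intro i j hij
    rw [ι_mul_ι_comm, hpolar i j hij, map_zero, zero_sub]
  suffices h : ∀ y x : CliffordAlgebra Qf,
      bas.coord ∅ (x * y) = bas.coord ∅ (y * x) from fun x y => h y x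
  intro y
  induction y using CliffordAlgebra.induction with
  | algebraMap r => intro x; rw [Algebra.commutes]
  | ι v => intro x; exact gen_coord_x hac bas hbas v x
  | mul y₁ y₂ h₁ h₂ =>
      intro x
      calc bas.coord ∅ (x * (y₁ * y₂))
          = bas.coord ∅ ((x * y₁) * y₂) := by rw [mul_assoc]
        _ = bas.coord ∅ (y₂ * (x * y₁)) := h₂ (x * y₁)
        _ = bas.coord ∅ ((y₂ * x) * y₁) := by rw [mul_assoc]
        _ = bas.coord ∅ (y₁ * (y₂ * x)) := h₁ (y₂ * x)
        _ = bas.coord ∅ ((y₁ * y₂) * x) := by rw [mul_assoc]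
  | add y₁ y₂ h₁ h₂ =>
      intro x
      rw [mul_add, add_mul, map_add, map_add, h₁ x, h₂ x]
end

section
/- The center of the Lie algebra G = {ξ ∈ Cl(V,Q) : c(ξ) = -ξ} (with bracket [x,y] = xy - yx) equals G ∩ Z(Cl(V,Q)), the intersection of G with the center of the Clifford algebra. -/
open CliffordAlgebra

theorem stmt15 {F V : Type*} [Field F] [AddCommGroup V] [Module F V]
    [FiniteDimensional F V] (h2 : (2 : F) ≠ 0)
    (B : LinearMap.BilinForm F V)
    (hsymm : ∀ v w : V, B v w = B w v)
    (hnd : ∀ v : V, (∀ w : V, B v w = 0) → v = 0)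
    (Qf : QuadraticForm F V) (hQ : ∀ v : V, Qf v = -(B v v)) :
    ∀ ξ : CliffordAlgebra Qf,
      (cconj Qf ξ = -ξ ∧
        ∀ η : CliffordAlgebra Qf, cconj Qf η = -η → ξ * η - η * ξ = 0) ↔
      (cconj Qf ξ = -ξ ∧ ξ ∈ Subalgebra.center F (CliffordAlgebra Qf)) := by
  have hcι : ∀ v : V, cconj Qf (ι Qf v) = -(ι Qf v) := by
    intro v
    simp [cconj, reverse_ι, involute_ι]
  intro ξ
  constructor
  · rintro ⟨hξ, hcomm⟩
    refine ⟨hξ, Subalgebra.mem_center_iff.mpr ?_⟩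
    intro b
    induction b using CliffordAlgebra.induction with
    | algebraMap r => simp [Algebra.commutes]
    | ι v =>
      have := hcomm (ι Qf v) (hcι v)
      rw [sub_eq_zero] at this
      exact this.symm
    | mul x y hx hy => rw [mul_assoc, hy, ← mul_assoc, hx, mul_assoc]
    | add x y hx hy => rw [add_mul, mul_add, hx, hy]
  · rintro ⟨hξ, hc⟩
    refine ⟨hξ, fun η _ => ?_⟩
    rw [Subalgebra.mem_center_iff] at hc
    rw [hc η, sub_self]
end

section
/- If n is even, or n ≡ 3 (mod 4), then the center of the Lie algebra G = {ξ ∈ Cl(V,Q) : c(ξ) = -ξ} is {0}; if n ≡ 1 (mod 4), the center of G is the one-dimensional span of ω = e₁⋯eₙ. -/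
open CliffordAlgebra

namespace Stmt17Aux

variable {F V : Type*} [Field F] [AddCommGroup V] [Module F V]
variable (Qf : QuadraticForm F V) {n : ℕ} (b : Module.Basis (Fin n) F V)

/-- toggle membership of `i` in `s` -/
def tog (i : Fin n) (s : Finset (Fin n)) : Finset (Fin n) :=
  if i ∈ s then s.erase i else insert i s

noncomputable def cL (i : Fin n) (s : Finset (Fin n)) : F :=
  (-1) ^ ((s.filter (· < i)).card) * (if i ∈ s then Qf (b i) else 1)

noncomputable def cR (i : Fin n) (s : Finset (Fin n)) : F :=
  (-1) ^ ((s.filter (i < ·)).card) * (if i ∈ s then Qf (b i) else 1)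

lemma eI_empty : eI Qf b ∅ = 1 := by simp [eI]

lemma eI_singleton (i : Fin n) : eI Qf b {i} = ι Qf (b i) := by simp [eI]

lemma eI_insert {i : Fin n} {s : Finset (Fin n)} (h : ∀ j ∈ s, i < j) (hi : i ∉ s) :
    eI Qf b (insert i s) = ι Qf (b i) * eI Qf b s := by
  unfold eI
  rw [Finset.sort_insert _ (fun j hj => (h j hj).le) hi]
  simp

lemma exists_min_struct {s : Finset (Fin n)} (hne : s.Nonempty) :
    ∃ a t, a ∉ t ∧ (∀ j ∈ t, a < j) ∧ s = insert a t := by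
  refine ⟨s.min' hne, s.erase (s.min' hne), Finset.notMem_erase _ _, ?_,
    (Finset.insert_erase (s.min'_mem hne)).symm⟩
  intro j hj
  exact lt_of_le_of_ne (s.min'_le j (Finset.mem_of_mem_erase hj))
    (Finset.ne_of_mem_erase hj).symm

lemma tog_tog (i : Fin n) (s : Finset (Fin n)) : tog i (tog i s) = s := by
  unfold tog
  by_cases h : i ∈ s
  · simp [h, Finset.insert_erase h]
  · simp [h, Finset.erase_insert h]

lemma lmul (hanti : ∀ i j : Fin n, i ≠ j → ι Qf (b i) * ι Qf (b j) = -(ι Qf (b j) * ι Qf (b i)))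
    (i : Fin n) (s : Finset (Fin n)) :
    ι Qf (b i) * eI Qf b s = cL Qf b i s • eI Qf b (tog i s) := by
  induction s using Finset.strongInduction with
  | _ s ih =>
  rcases s.eq_empty_or_nonempty with rfl | hne
  · simp [eI_empty, tog, cL, eI_singleton]
  obtain ⟨a, t, hat, hmin, rfl⟩ := exists_min_struct hne
  rcases lt_trichotomy i a with hia | rfl | hai
  · -- i < a
    have hials : ∀ j ∈ insert a t, i < j := by
      intro j hj
      rcases Finset.mem_insert.mp hj with rfl | hj
      · exact hia
      · exact hia.trans (hmin j hj)
    have hins : i ∉ insert a t := fun h => lt_irrefl i (hials i h)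
    have hfil : (insert a t).filter (· < i) = ∅ :=
      Finset.filter_eq_empty_iff.mpr (fun {j} hj => not_lt.mpr (hials j hj).le)
    rw [tog, if_neg hins, cL, if_neg hins, hfil, eI_insert _ _ hials hins]
    simp
  · -- i = a
    have hamem : i ∈ insert i t := Finset.mem_insert_self i t
    have hfil : (insert i t).filter (· < i) = ∅ := by
      refine Finset.filter_eq_empty_iff.mpr ?_
      intro j hj
      rcases Finset.mem_insert.mp hj with rfl | hj
      · exact lt_irrefl _
      · exact not_lt.mpr (hmin j hj).le
    rw [eI_insert _ _ hmin hat, ← mul_assoc, ι_sq_scalar, tog, if_pos hamem, cL, if_pos hamem,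
      hfil, Finset.erase_insert hat]
    simp [Algebra.smul_def]
  · -- a < i
    have hia : i ≠ a := ne_of_gt hai
    rw [eI_insert _ _ hmin hat, ← mul_assoc, hanti i a hia, neg_mul, mul_assoc,
      ih t (Finset.ssubset_insert hat), mul_smul_comm]
    have h1 : ∀ j ∈ tog i t, a < j := by
      intro j hj
      unfold tog at hj
      by_cases hit : i ∈ t
      · rw [if_pos hit] at hj
        exact hmin j (Finset.mem_of_mem_erase hj)
      · rw [if_neg hit] at hj
        rcases Finset.mem_insert.mp hj with rfl | hj
        · exact hai
        · exact hmin j hj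
    have h2 : a ∉ tog i t := fun h => lt_irrefl a (h1 a h)
    rw [← eI_insert _ _ h1 h2]
    have hset : insert a (tog i t) = tog i (insert a t) := by
      unfold tog
      by_cases hit : i ∈ t
      · rw [if_pos hit, if_pos (Finset.mem_insert_of_mem hit),
          Finset.erase_insert_of_ne hia.symm]
      · have : i ∉ insert a t := by
          simp only [Finset.mem_insert]
          rintro (rfl | h)
          · exact hia rfl
          · exact hit h
        rw [if_neg hit, if_neg this, Finset.insert_comm]
    have hmemiff : i ∈ insert a t ↔ i ∈ t := by
      simp only [Finset.mem_insert]
      constructor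
      · rintro (rfl | h)
        · exact absurd rfl hia
        · exact h
      · exact Or.inr
    have hsign : cL Qf b i (insert a t) = -cL Qf b i t := by
      unfold cL
      have hfil : (insert a t).filter (· < i) = insert a (t.filter (· < i)) := by
        rw [Finset.filter_insert, if_pos hai]
      have hanotin : a ∉ t.filter (· < i) := fun h => hat (Finset.mem_of_mem_filter a h)
      rw [hfil, Finset.card_insert_of_notMem hanotin, pow_succ]
      by_cases hit : i ∈ t
      · rw [if_pos hit, if_pos (hmemiff.mpr hit)]; ring
      · rw [if_neg hit, if_neg (fun h => hit (hmemiff.mp h))]; ring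
    rw [hset, hsign, neg_smul]

lemma rmul (hanti : ∀ i j : Fin n, i ≠ j → ι Qf (b i) * ι Qf (b j) = -(ι Qf (b j) * ι Qf (b i)))
    (i : Fin n) (s : Finset (Fin n)) :
    eI Qf b s * ι Qf (b i) = cR Qf b i s • eI Qf b (tog i s) := by
  induction s using Finset.strongInduction with
  | _ s ih =>
  rcases s.eq_empty_or_nonempty with rfl | hne
  · simp [eI_empty, tog, cR, eI_singleton]
  obtain ⟨a, t, hat, hmin, rfl⟩ := exists_min_struct hne
  rw [eI_insert _ _ hmin hat, mul_assoc, ih t (Finset.ssubset_insert hat), mul_smul_comm,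
    lmul Qf b hanti a (tog i t), smul_smul]
  rcases eq_or_ne i a with rfl | hia
  · -- i = a, so i ∉ t
    have e1 : tog i t = insert i t := by rw [tog, if_neg hat]
    have e2 : i ∈ insert i t := Finset.mem_insert_self i t
    have hset : tog i (tog i t) = tog i (insert i t) := by rw [e1]
    have hfil1 : (insert i t).filter (· < i) = ∅ := by
      refine Finset.filter_eq_empty_iff.mpr ?_
      intro j hj
      rcases Finset.mem_insert.mp hj with rfl | hj
      · exact lt_irrefl _
      · exact not_lt.mpr (hmin j hj).le
    have hfil2 : t.filter (i < ·) = t := Finset.filter_true_of_mem (fun j hj => hmin j hj)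
    have hfil3 : (insert i t).filter (i < ·) = t := by
      rw [Finset.filter_insert, if_neg (lt_irrefl i), hfil2]
    have hco : cR Qf b i t * cL Qf b i (tog i t) = cR Qf b i (insert i t) := by
      rw [e1, cR, cR, cL, if_neg hat, if_pos e2, hfil1, hfil2, hfil3]
      simp
    rw [hco, tog_tog, tog, if_pos e2, Finset.erase_insert hat]
  · -- i ≠ a
    have hmemiff : i ∈ insert a t ↔ i ∈ t := by
      simp only [Finset.mem_insert]
      constructor
      · rintro (rfl | h)
        · exact absurd rfl hia
        · exact h
      · exact Or.inr
    by_cases hit : i ∈ t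
    · -- i ∈ t, hence a < i
      have hai : a < i := hmin i hit
      have e1 : tog i t = t.erase i := by rw [tog, if_pos hit]
      have e2 : a ∉ t.erase i := fun h => hat (Finset.mem_of_mem_erase h)
      have e4 : i ∈ insert a t := Finset.mem_insert_of_mem hit
      have hset : tog a (tog i t) = tog i (insert a t) := by
        rw [e1, tog, if_neg e2, tog, if_pos e4, Finset.erase_insert_of_ne hia.symm]
      have hfilL : (t.erase i).filter (· < a) = ∅ := by
        refine Finset.filter_eq_empty_iff.mpr ?_
        intro j hj
        exact not_lt.mpr (hmin j (Finset.mem_of_mem_erase hj)).le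
      have hfilR : (insert a t).filter (i < ·) = t.filter (i < ·) := by
        rw [Finset.filter_insert, if_neg (not_lt.mpr hai.le)]
      have hco : cR Qf b i t * cL Qf b a (tog i t) = cR Qf b i (insert a t) := by
        rw [e1, cR, cR, cL, if_pos hit, if_pos e4, if_neg e2, hfilL, hfilR]
        simp
      rw [hco, hset]
    · -- i ∉ t, i ∉ insert a t
      have hins : i ∉ insert a t := fun h => hit (hmemiff.mp h)
      have e1 : tog i t = insert i t := by rw [tog, if_neg hit]
      have e2 : a ∉ insert i t := by
        simp only [Finset.mem_insert]
        rintro (rfl | h)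
        · exact hia rfl
        · exact hat h
      have hset : tog a (tog i t) = tog i (insert a t) := by
        rw [e1, tog, if_neg e2, tog, if_neg hins, Finset.insert_comm]
      have hfil2 : t.filter (i < ·) = (insert a t).filter (i < ·) →
          True := fun _ => trivial
      have hco : cR Qf b i t * cL Qf b a (tog i t) = cR Qf b i (insert a t) := by
        rw [e1, cR, cR, cL, if_neg hit, if_neg hins, if_neg e2]
        rcases lt_or_gt_of_ne hia with hlt | hgt
        · -- i < a
          have hfilL : (insert i t).filter (· < a) = {i} := by
            rw [Finset.filter_insert, if_pos hlt]
            have : t.filter (· < a) = ∅ := Finset.filter_eq_empty_iff.mpr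
              (fun {j} hj => not_lt.mpr (hmin j hj).le)
            rw [this]
            rfl
          have hfA : t.filter (i < ·) = t := Finset.filter_true_of_mem
            (fun j hj => hlt.trans (hmin j hj))
          have hfB : (insert a t).filter (i < ·) = insert a t := Finset.filter_true_of_mem
            (by
              intro j hj
              rcases Finset.mem_insert.mp hj with rfl | hj
              · exact hlt
              · exact hlt.trans (hmin j hj))
          rw [hfilL, hfA, hfB, Finset.card_insert_of_notMem hat, Finset.card_singleton,
            pow_succ]
          ring
        · -- a < i
          have hfilL : (insert i t).filter (· < a) = ∅ := by
            refine Finset.filter_eq_empty_iff.mpr ?_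
            intro j hj
            rcases Finset.mem_insert.mp hj with rfl | hj
            · exact not_lt.mpr hgt.le
            · exact not_lt.mpr (hmin j hj).le
          have hfB : (insert a t).filter (i < ·) = t.filter (i < ·) := by
            rw [Finset.filter_insert, if_neg (not_lt.mpr hgt.le)]
          rw [hfilL, hfB]
          simp
      rw [hco, hset]

lemma neg_one_pow_eq_of_even_add {a c : ℕ} (h : Even (a + c)) : ((-1 : F) ^ a) = (-1) ^ c := by
  have h' := Nat.even_add.mp h
  rcases em (Even a) with ha | ha
  · rw [ha.neg_one_pow, (h'.mp ha).neg_one_pow]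
  · rw [(Nat.not_even_iff_odd.mp ha).neg_one_pow,
      (Nat.not_even_iff_odd.mp (fun hc => ha (h'.mpr hc))).neg_one_pow]

lemma involute_eI (hanti : ∀ i j : Fin n, i ≠ j →
      ι Qf (b i) * ι Qf (b j) = -(ι Qf (b j) * ι Qf (b i)))
    (s : Finset (Fin n)) :
    involute (eI Qf b s) = ((-1 : F) ^ s.card) • eI Qf b s := by
  induction s using Finset.strongInduction with
  | _ s ih =>
  rcases s.eq_empty_or_nonempty with rfl | hne
  · simp [eI_empty]
  obtain ⟨a, t, hat, hmin, rfl⟩ := exists_min_struct hne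
  rw [eI_insert _ _ hmin hat, map_mul, involute_ι, ih t (Finset.ssubset_insert hat),
    Finset.card_insert_of_notMem hat, pow_succ, neg_mul, mul_smul_comm, ← neg_smul,
    mul_neg_one]

lemma reverse_eI (hanti : ∀ i j : Fin n, i ≠ j →
      ι Qf (b i) * ι Qf (b j) = -(ι Qf (b j) * ι Qf (b i)))
    (s : Finset (Fin n)) :
    reverse (eI Qf b s) = ((-1 : F) ^ (s.card.choose 2)) • eI Qf b s := by
  induction s using Finset.strongInduction with
  | _ s ih =>
  rcases s.eq_empty_or_nonempty with rfl | hne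
  · simp [eI_empty]
  obtain ⟨a, t, hat, hmin, rfl⟩ := exists_min_struct hne
  have hfil : t.filter (a < ·) = t := Finset.filter_true_of_mem (fun j hj => hmin j hj)
  have htog : tog a t = insert a t := by rw [tog, if_neg hat]
  rw [eI_insert _ _ hmin hat, reverse.map_mul, reverse_ι, ih t (Finset.ssubset_insert hat),
    smul_mul_assoc, rmul Qf b hanti, cR, if_neg hat, hfil, htog, smul_smul,
    Finset.card_insert_of_notMem hat]
  congr 1
  · rw [mul_one, ← pow_add]
    congr 1
    rw [Nat.choose_succ_succ, Nat.choose_one_right, Nat.add_comm]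
  · exact eI_insert _ _ hmin hat

lemma cconj_eI (hanti : ∀ i j : Fin n, i ≠ j →
      ι Qf (b i) * ι Qf (b j) = -(ι Qf (b j) * ι Qf (b i)))
    (s : Finset (Fin n)) :
    cconj Qf (eI Qf b s) = ((-1 : F) ^ (s.card.choose 2 + s.card)) • eI Qf b s := by
  have : cconj Qf (eI Qf b s) = involute (reverse (eI Qf b s)) := rfl
  rw [this, reverse_eI Qf b hanti, map_smul, involute_eI Qf b hanti, smul_smul, ← pow_add]

lemma cconj_ι (v : V) : cconj Qf (ι Qf v) = -(ι Qf v) := by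
  have : cconj Qf (ι Qf v) = involute (reverse (ι Qf v)) := rfl
  rw [this, reverse_ι, involute_ι]

lemma filter_card_split (i : Fin n) (s : Finset (Fin n)) :
    (s.filter (· < i)).card + (s.filter (i < ·)).card = (s.erase i).card := by
  have h := Finset.card_filter_add_card_filter_not (s := s.erase i) (p := (· < i))
  have e1 : (s.erase i).filter (· < i) = s.filter (· < i) := by
    rw [Finset.filter_erase, Finset.erase_eq_of_notMem]
    intro hmem
    exact lt_irrefl i (Finset.mem_filter.mp hmem).2
  have e2 : (s.erase i).filter (fun j => ¬ j < i) = s.filter (i < ·) := by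
    ext j
    simp only [Finset.mem_filter, Finset.mem_erase]
    constructor
    · rintro ⟨⟨hne, hjs⟩, hnlt⟩
      exact ⟨hjs, (not_lt.mp hnlt).lt_of_ne (Ne.symm hne)⟩
    · rintro ⟨hjs, hlt⟩
      exact ⟨⟨ne_of_gt hlt, hjs⟩, not_lt.mpr hlt.le⟩
  rw [e1, e2] at h
  exact h

/-! ### A representation used to prove linear independence of the monomials -/

noncomputable def Lco (i : Fin n) (t : Finset (Fin n)) : F :=
  (-1) ^ ((t.filter (· < i)).card) * (if i ∈ t then 1 else Qf (b i))

noncomputable def Lop (i : Fin n) : (Finset (Fin n) → F) →ₗ[F] (Finset (Fin n) → F) where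
  toFun m t := Lco Qf b i t * m (tog i t)
  map_add' m m' := by funext t; simp [mul_add]
  map_smul' r m := by funext t; simp only [Pi.smul_apply, smul_eq_mul, RingHom.id_apply]; ring

lemma mem_tog_self (i : Fin n) (t : Finset (Fin n)) : i ∈ tog i t ↔ i ∉ t := by
  unfold tog
  by_cases h : i ∈ t <;> simp [h]

lemma mem_tog_of_ne {i j : Fin n} (h : j ≠ i) (t : Finset (Fin n)) :
    j ∈ tog i t ↔ j ∈ t := by
  unfold tog
  by_cases hh : i ∈ t <;> simp [hh, Finset.mem_erase, Finset.mem_insert, h]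

lemma tog_comm {i j : Fin n} (h : i ≠ j) (t : Finset (Fin n)) :
    tog i (tog j t) = tog j (tog i t) := by
  ext k
  rcases eq_or_ne k i with rfl | hki
  · rw [mem_tog_self, mem_tog_of_ne h, mem_tog_of_ne h, mem_tog_self]
  · rcases eq_or_ne k j with rfl | hkj
    · rw [mem_tog_of_ne h.symm, mem_tog_self, mem_tog_self, mem_tog_of_ne h.symm]
    · rw [mem_tog_of_ne hki, mem_tog_of_ne hkj, mem_tog_of_ne hkj, mem_tog_of_ne hki]

lemma filter_lt_tog_ge {i j : Fin n} (hij : ¬ i < j) (t : Finset (Fin n)) :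
    (tog i t).filter (· < j) = t.filter (· < j) := by
  unfold tog
  by_cases h : i ∈ t
  · rw [if_pos h, Finset.filter_erase, Finset.erase_eq_of_notMem]
    intro hh
    exact hij (Finset.mem_filter.mp hh).2
  · rw [if_neg h, Finset.filter_insert, if_neg hij]

lemma sign_filter_tog {i j : Fin n} (hij : i < j) (t : Finset (Fin n)) :
    ((-1 : F) ^ (((tog i t).filter (· < j)).card)) = -(-1) ^ ((t.filter (· < j)).card) := by
  unfold tog
  by_cases h : i ∈ t
  · rw [if_pos h, Finset.filter_erase]
    have hi : i ∈ t.filter (· < j) := Finset.mem_filter.mpr ⟨h, hij⟩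
    have e : t.filter (· < j) = insert i ((t.filter (· < j)).erase i) :=
      (Finset.insert_erase hi).symm
    conv_rhs => rw [e]
    rw [Finset.card_insert_of_notMem (Finset.notMem_erase _ _), pow_succ]
    ring
  · rw [if_neg h, Finset.filter_insert, if_pos hij,
      Finset.card_insert_of_notMem (fun hh => h (Finset.mem_of_mem_filter _ hh)), pow_succ]
    ring

lemma Lco_tog_flip {i j : Fin n} (h : i < j) (t : Finset (Fin n)) :
    Lco Qf b j (tog i t) = -(Lco Qf b j t) := by
  unfold Lco
  by_cases hjt : j ∈ t
  · rw [if_pos hjt, if_pos ((mem_tog_of_ne (ne_of_gt h) t).mpr hjt), sign_filter_tog h]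
    ring
  · rw [if_neg hjt, if_neg (fun hh => hjt ((mem_tog_of_ne (ne_of_gt h) t).mp hh)),
      sign_filter_tog h]
    ring

lemma Lco_tog_stable {i j : Fin n} (h : ¬ i < j) (hne : i ≠ j) (t : Finset (Fin n)) :
    Lco Qf b j (tog i t) = Lco Qf b j t := by
  unfold Lco
  rw [filter_lt_tog_ge h]
  by_cases hjt : j ∈ t
  · rw [if_pos hjt, if_pos ((mem_tog_of_ne hne.symm t).mpr hjt)]
  · rw [if_neg hjt, if_neg (fun hh => hjt ((mem_tog_of_ne hne.symm t).mp hh))]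

lemma Lco_self_pair (i : Fin n) (t : Finset (Fin n)) :
    Lco Qf b i t * Lco Qf b i (tog i t) = Qf (b i) := by
  unfold Lco
  rw [filter_lt_tog_ge (lt_irrefl i)]
  have hpow : ((-1:F) ^ ((t.filter (· < i)).card)) * (-1) ^ ((t.filter (· < i)).card) = 1 := by
    rw [← mul_pow]
    norm_num
  by_cases h : i ∈ t
  · rw [if_pos h, if_neg (fun hh => ((mem_tog_self i t).mp hh) h)]
    calc ((-1:F) ^ _ * 1) * ((-1) ^ _ * Qf (b i)) = ((-1) ^ _ * (-1) ^ _) * Qf (b i) := by ring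
    _ = Qf (b i) := by rw [hpow, one_mul]
  · rw [if_neg h, if_pos ((mem_tog_self i t).mpr h)]
    calc ((-1:F) ^ _ * Qf (b i)) * ((-1) ^ _ * 1) = ((-1) ^ _ * (-1) ^ _) * Qf (b i) := by ring
    _ = Qf (b i) := by rw [hpow, one_mul]

lemma Lco_anti {i j : Fin n} (hij : i ≠ j) (t : Finset (Fin n)) :
    Lco Qf b i t * Lco Qf b j (tog i t) = -(Lco Qf b j t * Lco Qf b i (tog j t)) := by
  rcases lt_or_gt_of_ne hij with h | h
  · rw [Lco_tog_flip Qf b h, Lco_tog_stable Qf b (not_lt.mpr h.le) (ne_of_gt h)]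
    ring
  · rw [Lco_tog_flip Qf b h, Lco_tog_stable Qf b (not_lt.mpr h.le) (ne_of_gt h)]
    ring

lemma Lop_Lop_self (i : Fin n) (m : Finset (Fin n) → F) :
    Lop Qf b i (Lop Qf b i m) = Qf (b i) • m := by
  funext t
  simp only [Lop, LinearMap.coe_mk, AddHom.coe_mk, Pi.smul_apply, smul_eq_mul]
  rw [tog_tog, ← mul_assoc, Lco_self_pair]

lemma Lop_Lop_anti {i j : Fin n} (hij : i ≠ j) (m : Finset (Fin n) → F) :
    Lop Qf b i (Lop Qf b j m) + Lop Qf b j (Lop Qf b i m) = 0 := by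
  funext t
  simp only [Lop, LinearMap.coe_mk, AddHom.coe_mk, Pi.add_apply, Pi.zero_apply]
  rw [tog_comm hij.symm]
  have h := Lco_anti Qf b hij t
  linear_combination (m (tog i (tog j t))) * h

lemma Lop_rel (i j : Fin n) :
    Lop Qf b i * Lop Qf b j + Lop Qf b j * Lop Qf b i
      = (if i = j then 2 * Qf (b i) else 0) • (1 : Module.End F (Finset (Fin n) → F)) := by
  rcases eq_or_ne i j with rfl | hij
  · rw [if_pos rfl]
    apply LinearMap.ext
    intro m
    simp only [LinearMap.add_apply, Module.End.mul_apply, LinearMap.smul_apply,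
      Module.End.one_apply]
    rw [Lop_Lop_self, ← add_smul, ← two_mul]
  · rw [if_neg hij, zero_smul]
    apply LinearMap.ext
    intro m
    simp only [LinearMap.add_apply, Module.End.mul_apply, LinearMap.zero_apply]
    exact Lop_Lop_anti Qf b hij m

lemma iota_mul_mem
    (hanti : ∀ i j : Fin n, i ≠ j → ι Qf (b i) * ι Qf (b j) = -(ι Qf (b j) * ι Qf (b i)))
    (i : Fin n) {x : CliffordAlgebra Qf}
    (hx : x ∈ Submodule.span F (Set.range (eI Qf b))) :
    ι Qf (b i) * x ∈ Submodule.span F (Set.range (eI Qf b)) := by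
  induction hx using Submodule.span_induction with
  | mem x hx =>
    obtain ⟨s, rfl⟩ := hx
    rw [lmul Qf b hanti]
    exact Submodule.smul_mem _ _ (Submodule.subset_span ⟨_, rfl⟩)
  | zero => rw [mul_zero]; exact Submodule.zero_mem _
  | add u v _ _ hu hv => rw [mul_add]; exact Submodule.add_mem _ hu hv
  | smul r u _ hu => rw [mul_smul_comm]; exact Submodule.smul_mem _ _ hu

lemma eI_mul_mem
    (hanti : ∀ i j : Fin n, i ≠ j → ι Qf (b i) * ι Qf (b j) = -(ι Qf (b j) * ι Qf (b i)))
    (s : Finset (Fin n)) {y : CliffordAlgebra Qf}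
    (hy : y ∈ Submodule.span F (Set.range (eI Qf b))) :
    eI Qf b s * y ∈ Submodule.span F (Set.range (eI Qf b)) := by
  induction s using Finset.strongInduction with
  | _ s ih =>
  rcases s.eq_empty_or_nonempty with rfl | hne
  · rw [eI_empty, one_mul]; exact hy
  obtain ⟨a, t, hat, hmin, rfl⟩ := exists_min_struct hne
  rw [eI_insert _ _ hmin hat, mul_assoc]
  exact iota_mul_mem Qf b hanti a (ih t (Finset.ssubset_insert hat))

lemma span_eI_top
    (hanti : ∀ i j : Fin n, i ≠ j → ι Qf (b i) * ι Qf (b j) = -(ι Qf (b j) * ι Qf (b i))) :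
    ⊤ ≤ Submodule.span F (Set.range (eI Qf b)) := by
  have h1 : (1 : CliffordAlgebra Qf) ∈ Submodule.span F (Set.range (eI Qf b)) := by
    rw [← eI_empty Qf b]
    exact Submodule.subset_span ⟨∅, rfl⟩
  have hιv : ∀ v : V, ∀ x ∈ Submodule.span F (Set.range (eI Qf b)),
      ι Qf v * x ∈ Submodule.span F (Set.range (eI Qf b)) := by
    intro v x hx
    have hv : ι Qf v = ∑ i, b.repr v i • ι Qf (b i) := by
      conv_lhs => rw [← Module.Basis.sum_repr b v]
      rw [map_sum]
      simp
    rw [hv, Finset.sum_mul]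
    refine Submodule.sum_mem _ (fun i _ => ?_)
    rw [smul_mul_assoc]
    exact Submodule.smul_mem _ _ (iota_mul_mem Qf b hanti i hx)
  intro x _
  induction x using CliffordAlgebra.induction with
  | algebraMap r =>
    rw [Algebra.algebraMap_eq_smul_one]
    exact Submodule.smul_mem _ _ h1
  | ι v =>
    have := hιv v 1 h1
    rwa [mul_one] at this
  | mul a c ha hc =>
    have hmul : ∀ u ∈ Submodule.span F (Set.range (eI Qf b)),
        u * c ∈ Submodule.span F (Set.range (eI Qf b)) := by
      intro u hu
      induction hu using Submodule.span_induction with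
      | mem u hu =>
        obtain ⟨s, rfl⟩ := hu
        exact eI_mul_mem Qf b hanti s (hc Submodule.mem_top)
      | zero => rw [zero_mul]; exact Submodule.zero_mem _
      | add u v _ _ hu hv => rw [add_mul]; exact Submodule.add_mem _ hu hv
      | smul r u _ hu => rw [smul_mul_assoc]; exact Submodule.smul_mem _ _ hu
    exact hmul a (ha Submodule.mem_top)
  | add a c ha hc => exact Submodule.add_mem _ (ha Submodule.mem_top) (hc Submodule.mem_top)

noncomputable def opV : V →ₗ[F] Module.End F (Finset (Fin n) → F) :=
  b.constr F (fun i => Lop Qf b i)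

lemma opV_sq (h2 : (2 : F) ≠ 0)
    (hQd : ∀ v : V, Qf v = ∑ i, (b.repr v i * b.repr v i) * Qf (b i)) (v : V) :
    opV Qf b v * opV Qf b v = algebraMap F (Module.End F (Finset (Fin n) → F)) (Qf v) := by
  have hov : opV Qf b v = ∑ i, b.repr v i • Lop Qf b i := by
    rw [opV, Module.Basis.constr_apply_fintype]
    simp [Module.Basis.equivFun_apply]
  have expand : opV Qf b v * opV Qf b v
      = ∑ i, ∑ j, (b.repr v i * b.repr v j) • (Lop Qf b i * Lop Qf b j) := by
    rw [hov, Finset.sum_mul_sum]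
    refine Finset.sum_congr rfl fun i _ => Finset.sum_congr rfl fun j _ => ?_
    rw [smul_mul_assoc, mul_smul_comm, smul_smul]
  have e2 : opV Qf b v * opV Qf b v
      = ∑ i, ∑ j, (b.repr v j * b.repr v i) • (Lop Qf b j * Lop Qf b i) := by
    rw [expand]
    exact Finset.sum_comm
  have key : (2:F) • (opV Qf b v * opV Qf b v)
      = (2 * Qf v) • (1 : Module.End F (Finset (Fin n) → F)) := by
    have hA : (2:F) • (opV Qf b v * opV Qf b v)
        = ∑ i, ∑ j, (b.repr v i * b.repr v j) •
            (Lop Qf b i * Lop Qf b j + Lop Qf b j * Lop Qf b i) := by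
      rw [two_smul]
      nth_rewrite 1 [expand]
      nth_rewrite 1 [e2]
      rw [← Finset.sum_add_distrib]
      refine Finset.sum_congr rfl fun i _ => ?_
      rw [← Finset.sum_add_distrib]
      refine Finset.sum_congr rfl fun j _ => ?_
      rw [smul_add, mul_comm (b.repr v j) (b.repr v i)]
    rw [hA]
    have hB : ∀ i j : Fin n, (b.repr v i * b.repr v j) •
          (Lop Qf b i * Lop Qf b j + Lop Qf b j * Lop Qf b i)
        = (if i = j then (b.repr v i * b.repr v i) * (2 * Qf (b i)) else 0) •
            (1 : Module.End F (Finset (Fin n) → F)) := by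
      intro i j
      rw [Lop_rel, smul_smul]
      rcases eq_or_ne i j with rfl | hij
      · rw [if_pos rfl, if_pos rfl]
      · rw [if_neg hij, if_neg hij, mul_zero]
    calc ∑ i, ∑ j, (b.repr v i * b.repr v j) •
          (Lop Qf b i * Lop Qf b j + Lop Qf b j * Lop Qf b i)
        = ∑ i : Fin n, ∑ j : Fin n, (if i = j then (b.repr v i * b.repr v i) * (2 * Qf (b i))
            else 0) • (1 : Module.End F (Finset (Fin n) → F)) :=
          Finset.sum_congr rfl fun i _ => Finset.sum_congr rfl fun j _ => hB i j
      _ = ∑ i : Fin n, ((b.repr v i * b.repr v i) * (2 * Qf (b i))) •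
            (1 : Module.End F (Finset (Fin n) → F)) := by
          refine Finset.sum_congr rfl fun i _ => ?_
          simp [ite_smul]
      _ = (2 * Qf v) • (1 : Module.End F (Finset (Fin n) → F)) := by
          rw [← Finset.sum_smul]
          congr 1
          rw [hQd v, Finset.mul_sum]
          refine Finset.sum_congr rfl fun i _ => ?_
          ring
  have h2' : opV Qf b v * opV Qf b v = (Qf v) • (1 : Module.End F (Finset (Fin n) → F)) := by
    have hkey := key
    rw [show (2 * Qf v) • (1 : Module.End F (Finset (Fin n) → F))
        = (2:F) • ((Qf v) • (1 : Module.End F (Finset (Fin n) → F))) by rw [smul_smul]] at hkey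
    exact smul_right_injective _ h2 hkey
  rw [h2', Algebra.algebraMap_eq_smul_one]

noncomputable def rep (h2 : (2 : F) ≠ 0)
    (hQd : ∀ v : V, Qf v = ∑ i, (b.repr v i * b.repr v i) * Qf (b i)) :
    CliffordAlgebra Qf →ₐ[F] Module.End F (Finset (Fin n) → F) :=
  CliffordAlgebra.lift Qf ⟨opV Qf b, opV_sq Qf b h2 hQd⟩

lemma rep_eI (h2 : (2 : F) ≠ 0)
    (hQd : ∀ v : V, Qf v = ∑ i, (b.repr v i * b.repr v i) * Qf (b i))
    (s : Finset (Fin n)) :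
    rep Qf b h2 hQd (eI Qf b s) (Pi.single ∅ 1) = Pi.single s 1 := by
  induction s using Finset.strongInduction with
  | _ s ih =>
  rcases s.eq_empty_or_nonempty with rfl | hne
  · rw [eI_empty, map_one]
    rfl
  obtain ⟨a, t, hat, hmin, rfl⟩ := exists_min_struct hne
  rw [eI_insert _ _ hmin hat, map_mul, Module.End.mul_apply]
  have hra : rep Qf b h2 hQd (ι Qf (b a)) = Lop Qf b a := by
    rw [rep, lift_ι_apply]
    exact b.constr_basis F _ a
  rw [hra, ih t (Finset.ssubset_insert hat)]
  funext u
  simp only [Lop, LinearMap.coe_mk, AddHom.coe_mk]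
  by_cases hu : u = insert a t
  · subst hu
    have e1 : tog a (insert a t) = t := by
      rw [tog, if_pos (Finset.mem_insert_self a t), Finset.erase_insert hat]
    have e2 : Lco Qf b a (insert a t) = 1 := by
      rw [Lco, if_pos (Finset.mem_insert_self a t)]
      have hfil : (insert a t).filter (· < a) = ∅ := by
        refine Finset.filter_eq_empty_iff.mpr ?_
        intro j hj
        rcases Finset.mem_insert.mp hj with rfl | hj
        · exact lt_irrefl _
        · exact not_lt.mpr (hmin j hj).le
      rw [hfil]
      simp
    rw [e1, e2, Pi.single_eq_same, Pi.single_eq_same, one_mul]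
  · have h3 : tog a u ≠ t := by
      intro h
      apply hu
      have h' := congrArg (tog a) h
      rw [tog_tog] at h'
      rw [h', tog, if_neg hat]
    rw [Pi.single_eq_of_ne h3, Pi.single_eq_of_ne hu, mul_zero]

lemma eI_linearIndependent (h2 : (2 : F) ≠ 0)
    (hQd : ∀ v : V, Qf v = ∑ i, (b.repr v i * b.repr v i) * Qf (b i)) :
    LinearIndependent F (eI Qf b) := by
  have h0 := (Pi.basisFun F (Finset (Fin n))).linearIndependent
  have h1 : LinearIndependent F (fun s : Finset (Fin n) => Pi.single s (1:F)) := by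
    have e : ⇑(Pi.basisFun F (Finset (Fin n))) = fun s => Pi.single s (1:F) :=
      funext fun s => Pi.basisFun_apply F _ s
    rwa [e] at h0
  refine LinearIndependent.of_comp
    ((LinearMap.applyₗ (Pi.single ∅ (1:F))).comp (rep Qf b h2 hQd).toLinearMap) ?_
  have e : (⇑((LinearMap.applyₗ (Pi.single ∅ (1:F))).comp
      (rep Qf b h2 hQd).toLinearMap) ∘ eI Qf b) = fun s => Pi.single s (1:F) := by
    funext s
    simp only [LinearMap.coe_comp, Function.comp_apply, AlgHom.toLinearMap_apply,
      LinearMap.applyₗ, LinearMap.applyₗ', LinearMap.coe_mk, AddHom.coe_mk]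
    exact rep_eI Qf b h2 hQd s
  rw [e]
  exact h1

noncomputable def basOf (h2 : (2 : F) ≠ 0)
    (hanti : ∀ i j : Fin n, i ≠ j → ι Qf (b i) * ι Qf (b j) = -(ι Qf (b j) * ι Qf (b i)))
    (hQd : ∀ v : V, Qf v = ∑ i, (b.repr v i * b.repr v i) * Qf (b i)) :
    Module.Basis (Finset (Fin n)) F (CliffordAlgebra Qf) :=
  Module.Basis.mk (eI_linearIndependent Qf b h2 hQd) (span_eI_top Qf b hanti)

lemma basOf_apply (h2 : (2 : F) ≠ 0)
    (hanti : ∀ i j : Fin n, i ≠ j → ι Qf (b i) * ι Qf (b j) = -(ι Qf (b j) * ι Qf (b i)))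
    (hQd : ∀ v : V, Qf v = ∑ i, (b.repr v i * b.repr v i) * Qf (b i))
    (s : Finset (Fin n)) :
    basOf Qf b h2 hanti hQd s = eI Qf b s :=
  Module.Basis.mk_apply _ _ s

lemma coord_sum_eq (bas : Module.Basis (Finset (Fin n)) F (CliffordAlgebra Qf))
    (hbas : ∀ s, bas s = eI Qf b s)
    (f : Finset (Fin n) → F) (g : Finset (Fin n) → Finset (Fin n))
    (hg : Function.Injective g) (t₀ : Finset (Fin n)) :
    bas.coord (g t₀) (∑ s, f s • eI Qf b (g s)) = f t₀ := by
  rw [map_sum]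
  have e : ∀ s, bas.coord (g t₀) (f s • eI Qf b (g s))
      = f s * (if g s = g t₀ then 1 else 0) := by
    intro s
    rw [map_smul, smul_eq_mul, ← hbas, Module.Basis.coord_apply, Module.Basis.repr_self,
      Finsupp.single_apply]
  rw [Finset.sum_congr rfl (fun s _ => e s), Finset.sum_eq_single t₀]
  · rw [if_pos rfl, mul_one]
  · intro s _ hne
    rw [if_neg (fun h => hne (hg h)), mul_zero]
  · intro h
    exact absurd (Finset.mem_univ t₀) h

lemma coord_sum_eq_id (bas : Module.Basis (Finset (Fin n)) F (CliffordAlgebra Qf))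
    (hbas : ∀ s, bas s = eI Qf b s)
    (f : Finset (Fin n) → F) (t₀ : Finset (Fin n)) :
    bas.coord t₀ (∑ s, f s • eI Qf b s) = f t₀ := by
  rw [map_sum]
  have e : ∀ s, bas.coord t₀ (f s • eI Qf b s) = f s * (if s = t₀ then 1 else 0) := by
    intro s
    rw [map_smul, smul_eq_mul, ← hbas, Module.Basis.coord_apply, Module.Basis.repr_self,
      Finsupp.single_apply]
  rw [Finset.sum_congr rfl (fun s _ => e s), Finset.sum_eq_single t₀]
  · rw [if_pos rfl, mul_one]
  · intro s _ hne
    rw [if_neg hne, mul_zero]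
  · intro h
    exact absurd (Finset.mem_univ t₀) h

end Stmt17Aux

open Stmt17Aux

theorem stmt17 {F V : Type*} [Field F] [AddCommGroup V] [Module F V]
    [FiniteDimensional F V] (h2 : (2 : F) ≠ 0)
    (B : LinearMap.BilinForm F V)
    (hsymm : ∀ v w : V, B v w = B w v)
    (hnd : ∀ v : V, (∀ w : V, B v w = 0) → v = 0)
    (Qf : QuadraticForm F V) (hQ : ∀ v : V, Qf v = -(B v v))
    {n : ℕ} (b : Module.Basis (Fin n) F V)
    (hortho : ∀ i j : Fin n, i ≠ j → B (b i) (b j) = 0) :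
    ((Even n ∨ n % 4 = 3) →
      {ξ : CliffordAlgebra Qf | cconj Qf ξ = -ξ ∧
          ∀ η : CliffordAlgebra Qf, cconj Qf η = -η → ξ * η = η * ξ} = {0}) ∧
    (n % 4 = 1 →
      {ξ : CliffordAlgebra Qf | cconj Qf ξ = -ξ ∧
          ∀ η : CliffordAlgebra Qf, cconj Qf η = -η → ξ * η = η * ξ}
        = ↑(Submodule.span F {eI Qf b Finset.univ})) := by
  classical
  -- anticommutation of distinct generators
  have hpolar : ∀ i j : Fin n, i ≠ j → QuadraticMap.polar (⇑Qf) (b i) (b j) = 0 := by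
    intro i j hij
    have hexp : QuadraticMap.polar (⇑Qf) (b i) (b j)
        = Qf (b i + b j) - Qf (b i) - Qf (b j) := rfl
    rw [hexp, hQ, hQ, hQ]
    simp only [map_add, LinearMap.add_apply]
    linear_combination (-1 : F) * hortho i j hij + (-1 : F) * hortho j i hij.symm
  have hanti : ∀ i j : Fin n, i ≠ j →
      ι Qf (b i) * ι Qf (b j) = -(ι Qf (b j) * ι Qf (b i)) := by
    intro i j hij
    have h := ι_mul_ι_add_swap (Q := Qf) (b i) (b j)
    rw [hpolar i j hij, map_zero] at h
    exact eq_neg_of_add_eq_zero_left h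
  -- nonzero diagonal values
  have hq : ∀ i : Fin n, Qf (b i) ≠ 0 := by
    intro i h
    have hBii : B (b i) (b i) = 0 := by
      have hh := hQ (b i)
      rw [h] at hh
      exact neg_eq_zero.mp hh.symm
    have hall : ∀ w : V, B (b i) w = 0 := by
      intro w
      conv_lhs => rw [← Module.Basis.sum_repr b w]
      rw [map_sum]
      refine Finset.sum_eq_zero fun j _ => ?_
      rw [map_smul, smul_eq_mul]
      rcases eq_or_ne i j with rfl | hij
      · rw [hBii, mul_zero]
      · rw [hortho i j hij, mul_zero]
    exact Module.Basis.ne_zero b i (hnd _ hall)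
  -- diagonal expansion of the quadratic form
  have hQd : ∀ v : V, Qf v = ∑ i, (b.repr v i * b.repr v i) * Qf (b i) := by
    intro v
    have hBvv : B v v = ∑ i, (b.repr v i * b.repr v i) * B (b i) (b i) := by
      conv_lhs => rw [← Module.Basis.sum_repr b v]
      rw [map_sum]
      refine Finset.sum_congr rfl fun i _ => ?_
      rw [map_smul, smul_eq_mul]
      have hcol : (B (∑ j, b.repr v j • b j)) (b i) = b.repr v i * B (b i) (b i) := by
        rw [map_sum, LinearMap.sum_apply]
        rw [Finset.sum_eq_single i]
        · rw [map_smul, LinearMap.smul_apply, smul_eq_mul]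
        · intro j _ hne
          rw [map_smul, LinearMap.smul_apply, smul_eq_mul, hortho j i hne, mul_zero]
        · intro h
          exact absurd (Finset.mem_univ i) h
      rw [hcol]
      ring
    rw [hQ v, hBvv, ← Finset.sum_neg_distrib]
    refine Finset.sum_congr rfl fun i _ => ?_
    rw [hQ (b i)]
    ring
  have hiota : ∀ v : V, ι Qf v = ∑ i, b.repr v i • ι Qf (b i) := by
    intro v
    conv_lhs => rw [← Module.Basis.sum_repr b v]
    rw [map_sum]
    simp
  -- the monomial basis
  set bas := basOf Qf b h2 hanti hQd with hbasdef
  have hbas : ∀ s, bas s = eI Qf b s := basOf_apply Qf b h2 hanti hQd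
  have hsum : ∀ ξ : CliffordAlgebra Qf, ξ = ∑ s, bas.repr ξ s • eI Qf b s := by
    intro ξ
    calc ξ = ∑ s, bas.repr ξ s • bas s := (Module.Basis.sum_repr bas ξ).symm
    _ = ∑ s, bas.repr ξ s • eI Qf b s :=
      Finset.sum_congr rfl fun s _ => by rw [hbas]
  have hcard_univ : (Finset.univ : Finset (Fin n)).card = n := by
    rw [Finset.card_univ, Fintype.card_fin]
  -- kill coefficients using commutation with generators
  have hkill_comm : ∀ ξ : CliffordAlgebra Qf,
      (∀ η, cconj Qf η = -η → ξ * η = η * ξ) →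
      ∀ s (i : Fin n), Odd ((s.erase i).card) → bas.repr ξ s = 0 := by
    intro ξ hcomm s i hodd
    have hx := hcomm _ (cconj_ι Qf (b i))
    have lhsE : ι Qf (b i) * ξ
        = ∑ u, (bas.repr ξ u * cL Qf b i u) • eI Qf b (tog i u) := by
      conv_lhs => rw [hsum ξ]
      rw [Finset.mul_sum]
      refine Finset.sum_congr rfl fun u _ => ?_
      rw [mul_smul_comm, lmul Qf b hanti, smul_smul]
    have rhsE : ξ * ι Qf (b i)
        = ∑ u, (bas.repr ξ u * cR Qf b i u) • eI Qf b (tog i u) := by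
      conv_lhs => rw [hsum ξ]
      rw [Finset.sum_mul]
      refine Finset.sum_congr rfl fun u _ => ?_
      rw [smul_mul_assoc, rmul Qf b hanti, smul_smul]
    have hginj : Function.Injective (tog i) :=
      Function.LeftInverse.injective (tog_tog i)
    have hL := coord_sum_eq Qf b bas hbas (fun u => bas.repr ξ u * cL Qf b i u) (tog i) hginj s
    have hR := coord_sum_eq Qf b bas hbas (fun u => bas.repr ξ u * cR Qf b i u) (tog i) hginj s
    rw [← lhsE] at hL
    rw [← rhsE] at hR
    have heq : bas.repr ξ s * cL Qf b i s = bas.repr ξ s * cR Qf b i s := by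
      rw [← hL, ← hR, hx]
    have hk := filter_card_split i s
    have hsign : ((-1:F) ^ ((s.filter (· < i)).card)) = -((-1) ^ ((s.filter (i < ·)).card)) := by
      have hoddk : Odd ((s.filter (· < i)).card + (s.filter (i < ·)).card) := hk ▸ hodd
      obtain ⟨m, hm⟩ := hoddk
      have heven : Even ((s.filter (· < i)).card + ((s.filter (i < ·)).card + 1)) :=
        ⟨m + 1, by omega⟩
      rw [neg_one_pow_eq_of_even_add (F := F) heven, pow_succ]
      ring
    have hcLR : cL Qf b i s - cR Qf b i s ≠ 0 := by
      rw [cL, cR, hsign]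
      set X := if i ∈ s then Qf (b i) else 1 with hX
      have hXne : X ≠ 0 := by
        rw [hX]
        split
        · exact hq i
        · exact one_ne_zero
      have hpow : ((-1:F) ^ ((s.filter (i < ·)).card)) ≠ 0 := pow_ne_zero _ (by norm_num)
      intro hzero
      have h2X : (2:F) * ((-1) ^ ((s.filter (i < ·)).card) * X) = 0 := by
        linear_combination -hzero
      rcases mul_eq_zero.mp h2X with h | h
      · exact h2 h
      · exact (mul_ne_zero hpow hXne) h
    have hfin : bas.repr ξ s * (cL Qf b i s - cR Qf b i s) = 0 := by
      linear_combination heq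
    rcases mul_eq_zero.mp hfin with h | h
    · exact h
    · exact absurd h hcLR
  -- kill coefficients using the conjugation condition
  have hkill_conj : ∀ ξ : CliffordAlgebra Qf, cconj Qf ξ = -ξ →
      ∀ s : Finset (Fin n), Even (s.card.choose 2 + s.card) → bas.repr ξ s = 0 := by
    intro ξ hconj s heven
    have lhsE : cconj Qf ξ
        = ∑ u, (bas.repr ξ u * (-1) ^ (u.card.choose 2 + u.card)) • eI Qf b u := by
      conv_lhs => rw [hsum ξ]
      rw [map_sum]
      refine Finset.sum_congr rfl fun u _ => ?_
      rw [map_smul, cconj_eI Qf b hanti, smul_smul]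
    have rhsE : -ξ = ∑ u, (-(bas.repr ξ u)) • eI Qf b u := by
      conv_lhs => rw [hsum ξ]
      rw [← Finset.sum_neg_distrib]
      exact Finset.sum_congr rfl fun u _ => by rw [neg_smul]
    have hL := coord_sum_eq_id Qf b bas hbas
      (fun u => bas.repr ξ u * (-1) ^ (u.card.choose 2 + u.card)) s
    have hR := coord_sum_eq_id Qf b bas hbas (fun u => -(bas.repr ξ u)) s
    rw [← lhsE] at hL
    rw [← rhsE] at hR
    have heq : bas.repr ξ s * (-1) ^ (s.card.choose 2 + s.card) = -(bas.repr ξ s) := by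
      rw [← hL, ← hR, hconj]
    rw [heven.neg_one_pow, mul_one] at heq
    have h2r : (2:F) * bas.repr ξ s = 0 := by linear_combination heq
    rcases mul_eq_zero.mp h2r with h | h
    · exact absurd h h2
    · exact h
  -- centrality of the volume element for odd n
  have homega : Odd n → ∀ x : CliffordAlgebra Qf,
      eI Qf b Finset.univ * x = x * eI Qf b Finset.univ := by
    intro hodd x
    have hgen : ∀ i : Fin n, ι Qf (b i) * eI Qf b Finset.univ
        = eI Qf b Finset.univ * ι Qf (b i) := by
      intro i
      rw [lmul Qf b hanti, rmul Qf b hanti]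
      congr 2
      rw [cL, cR]
      simp only [Finset.mem_univ, if_true]
      congr 1
      refine neg_one_pow_eq_of_even_add ?_
      have hk := filter_card_split i (Finset.univ : Finset (Fin n))
      have hcard : ((Finset.univ : Finset (Fin n)).erase i).card = n - 1 := by
        rw [Finset.card_erase_of_mem (Finset.mem_univ i), hcard_univ]
      rw [hcard] at hk
      obtain ⟨m, hm⟩ := hodd
      rw [hk]
      exact ⟨m, by omega⟩
    have hgenv : ∀ v : V, ι Qf v * eI Qf b Finset.univ
        = eI Qf b Finset.univ * ι Qf v := by
      intro v
      rw [hiota v, Finset.sum_mul, Finset.mul_sum]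
      refine Finset.sum_congr rfl fun i _ => ?_
      rw [smul_mul_assoc, mul_smul_comm, hgen i]
    induction x using CliffordAlgebra.induction with
    | algebraMap r => exact (Algebra.commutes r _).symm
    | ι v => exact (hgenv v).symm
    | mul a c ha hc => rw [← mul_assoc, ha, mul_assoc, hc, ← mul_assoc]
    | add a c ha hc => rw [mul_add, add_mul, ha, hc]
  have heps_empty : Even ((∅ : Finset (Fin n)).card.choose 2 + (∅ : Finset (Fin n)).card) := by
    simp
  -- kill all middle coefficients
  have hmid : ∀ ξ : CliffordAlgebra Qf,
      (∀ η, cconj Qf η = -η → ξ * η = η * ξ) → cconj Qf ξ = -ξ →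
      ∀ s : Finset (Fin n), s ≠ Finset.univ → bas.repr ξ s = 0 := by
    intro ξ hcomm hconj s hsuniv
    rcases s.eq_empty_or_nonempty with rfl | hne
    · exact hkill_conj ξ hconj ∅ heps_empty
    obtain ⟨i, hi⟩ := hne
    obtain ⟨i', hi'⟩ : ∃ i', i' ∉ s := by
      by_contra hall
      push_neg at hall
      exact hsuniv (Finset.eq_univ_iff_forall.mpr hall)
    by_cases hpar : Odd ((s.erase i).card)
    · exact hkill_comm ξ hcomm s i hpar
    · refine hkill_comm ξ hcomm s i' ?_
      have h1 : (s.erase i).card = s.card - 1 := Finset.card_erase_of_mem hi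
      have h2' : (s.erase i').card = s.card := by rw [Finset.erase_eq_of_notMem hi']
      have hpos : 1 ≤ s.card := Finset.card_pos.mpr ⟨i, hi⟩
      rw [Nat.not_odd_iff_even, h1] at hpar
      obtain ⟨m, hm⟩ := hpar
      rw [h2']
      exact ⟨m, by omega⟩
  constructor
  · -- Even n or n % 4 = 3
    intro hcase
    ext ξ
    simp only [Set.mem_setOf_eq, Set.mem_singleton_iff]
    constructor
    · rintro ⟨hconj, hcomm⟩
      have hall : ∀ s, bas.repr ξ s = 0 := by
        intro s
        by_cases hs : s = Finset.univ
        · subst hs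
          rcases hcase with heven | h3
          · rcases Nat.eq_zero_or_pos n with hn0 | hnpos
            · have huniv : (Finset.univ : Finset (Fin n)) = ∅ := by
                subst hn0
                exact Finset.univ_eq_empty
              rw [huniv]
              exact hkill_conj ξ hconj ∅ heps_empty
            · refine hkill_comm ξ hcomm _ (⟨0, hnpos⟩ : Fin n) ?_
              have hc : ((Finset.univ : Finset (Fin n)).erase ⟨0, hnpos⟩).card = n - 1 := by
                rw [Finset.card_erase_of_mem (Finset.mem_univ _), hcard_univ]
              rw [hc]
              obtain ⟨m, hm⟩ := heven
              exact ⟨m - 1, by omega⟩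
          · refine hkill_conj ξ hconj _ ?_
            rw [hcard_univ]
            obtain ⟨j, hj⟩ : ∃ j, n = 4 * j + 3 := ⟨n / 4, by omega⟩
            subst hj
            rw [Nat.choose_two_right]
            have he : 4 * j + 3 - 1 = 4 * j + 2 := by omega
            have hfact : (4 * j + 3) * (4 * j + 2) = 2 * ((4 * j + 3) * (2 * j + 1)) := by ring
            rw [he, hfact, Nat.mul_div_cancel_left _ (by norm_num : 0 < 2)]
            have hre : (4 * j + 3) * (2 * j + 1) + (4 * j + 3)
                = ((4 * j + 3) * (j + 1)) + ((4 * j + 3) * (j + 1)) := by ring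
            rw [hre]
            exact ⟨(4 * j + 3) * (j + 1), rfl⟩
        · exact hmid ξ hcomm hconj s hs
      calc ξ = ∑ s, bas.repr ξ s • eI Qf b s := hsum ξ
      _ = 0 := Finset.sum_eq_zero fun s _ => by rw [hall s, zero_smul]
    · rintro rfl
      exact ⟨by rw [map_zero, neg_zero], fun η _ => by rw [zero_mul, mul_zero]⟩
  · -- n % 4 = 1
    intro h4
    have hodd : Odd n := ⟨2 * (n / 4), by omega⟩
    ext ξ
    simp only [Set.mem_setOf_eq, SetLike.mem_coe]
    constructor
    · rintro ⟨hconj, hcomm⟩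
      have hξ : ξ = bas.repr ξ Finset.univ • eI Qf b Finset.univ := by
        calc ξ = ∑ s, bas.repr ξ s • eI Qf b s := hsum ξ
        _ = bas.repr ξ Finset.univ • eI Qf b Finset.univ := by
          rw [Finset.sum_eq_single Finset.univ]
          · intro s _ hne
            rw [hmid ξ hcomm hconj s hne, zero_smul]
          · intro h
            exact absurd (Finset.mem_univ _) h
      rw [hξ]
      exact Submodule.smul_mem _ _ (Submodule.mem_span_singleton_self _)
    · intro hmem
      obtain ⟨a, rfl⟩ := Submodule.mem_span_singleton.mp hmem
      have hpow : ((-1:F) ^ ((Finset.univ : Finset (Fin n)).card.choose 2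
          + (Finset.univ : Finset (Fin n)).card)) = -1 := by
        rw [hcard_univ]
        obtain ⟨j, hj⟩ : ∃ j, n = 4 * j + 1 := ⟨n / 4, by omega⟩
        subst hj
        rw [Nat.choose_two_right]
        have he : 4 * j + 1 - 1 = 4 * j := by omega
        have hfact : (4 * j + 1) * (4 * j) = 2 * ((4 * j + 1) * (2 * j)) := by ring
        rw [he, hfact, Nat.mul_div_cancel_left _ (by norm_num : 0 < 2)]
        have hoddE : Odd ((4 * j + 1) * (2 * j) + (4 * j + 1)) :=
          ⟨(4 * j + 1) * j + 2 * j, by ring⟩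
        exact hoddE.neg_one_pow
      constructor
      · rw [map_smul, cconj_eI Qf b hanti, hpow, smul_smul, mul_neg_one, neg_smul]
      · intro η hη
        rw [smul_mul_assoc, mul_smul_comm, homega hodd η]
end

section
/- For distinct multi-indices I ≠ J with e_I, e_J ∈ G = {ξ : c(ξ) = -ξ}, the Killing form B(e_I,e_J) = trace(ad e_I ∘ ad e_J) vanishes; moreover for each K with e_K ∈ G, (ad e_I)²(e_K) = λ e_K where λ = 0 or λ = 4e_I², so B(e_I,e_I) = 4 m_I e_I² with m_I the number of such K with nonzero eigenvalue. -/
open CliffordAlgebra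

namespace Stmt18Aux

variable {F V : Type*} [Field F] [AddCommGroup V] [Module F V]
  (Qf : QuadraticForm F V) {n : ℕ} (b : Module.Basis (Fin n) F V)

/-- product of generators along a list -/
noncomputable def pι (l : List (Fin n)) : CliffordAlgebra Qf :=
  (l.map fun i => ι Qf (b i)).prod

noncomputable def eI' (s : Finset (Fin n)) : CliffordAlgebra Qf :=
  pι Qf b (s.sort (· ≤ ·))

@[simp] lemma pι_nil : pι Qf b [] = 1 := rfl
@[simp] lemma pι_cons (i : Fin n) (l : List (Fin n)) :
    pι Qf b (i :: l) = ι Qf (b i) * pι Qf b l := by simp [pι]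
@[simp] lemma pι_append (l m : List (Fin n)) :
    pι Qf b (l ++ m) = pι Qf b l * pι Qf b m := by simp [pι]
@[simp] lemma pι_singleton (i : Fin n) : pι Qf b [i] = ι Qf (b i) := by simp [pι]

@[simp] lemma eI'_empty : eI' Qf b ∅ = 1 := by
  rw [eI', Finset.sort_empty]; rfl

@[simp] lemma eI'_singleton (i : Fin n) : eI' Qf b {i} = ι Qf (b i) := by
  rw [eI', Finset.sort_singleton, pι_singleton]

variable (horth : ∀ i j : Fin n, i ≠ j → QuadraticMap.polar Qf (b i) (b j) = 0)

section
include horth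

lemma anticomm {i j : Fin n} (hij : i ≠ j) :
    ι Qf (b i) * ι Qf (b j) = -(ι Qf (b j) * ι Qf (b i)) := by
  have h := ι_mul_ι_add_swap (Q := Qf) (b i) (b j)
  rw [horth i j hij, map_zero] at h
  exact eq_neg_of_add_eq_zero_left h

lemma lemA {i : Fin n} {l : List (Fin n)} (h : i ∉ l) :
    ι Qf (b i) * pι Qf b l = ((-1 : F) ^ l.length) • (pι Qf b l * ι Qf (b i)) := by
  induction l with
  | nil => simp
  | cons j l ih =>
    have hij : i ≠ j := fun he => h (he ▸ List.mem_cons_self)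
    have hil : i ∉ l := fun he => h (List.mem_cons_of_mem _ he)
    rw [pι_cons, ← mul_assoc, anticomm Qf b horth hij, neg_mul, mul_assoc,
      ih hil, mul_smul_comm, ← neg_smul, List.length_cons, pow_succ, mul_assoc]
    congr 1
    ring

end

/-- decomposition of the sorted list upon insertion -/
lemma sortInsert {i : Fin n} {w : Finset (Fin n)} (h : i ∉ w) :
    ∃ l₁ l₂ : List (Fin n), i ∉ l₁ ∧ i ∉ l₂ ∧
      w.sort (· ≤ ·) = l₁ ++ l₂ ∧ (insert i w).sort (· ≤ ·) = l₁ ++ i :: l₂ := by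
  set l := w.sort (· ≤ ·) with hl
  have hiw : i ∉ l := by simp [hl, h]
  have hperm : ((insert i w).sort (· ≤ ·)).Perm (List.orderedInsert (· ≤ ·) i l) := by
    refine List.Perm.trans ?_ (List.perm_orderedInsert _ _ _).symm
    rw [← Multiset.coe_eq_coe]
    show ((insert i w).sort (· ≤ ·) : Multiset (Fin n)) = ↑(i :: l)
    rw [Finset.sort_eq, Finset.insert_val_of_notMem h, hl]
    show _ = (i ::ₘ (w.sort (· ≤ ·) : Multiset (Fin n)))
    rw [Finset.sort_eq]
  have heq : (insert i w).sort (· ≤ ·) = List.orderedInsert (· ≤ ·) i l :=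
    List.Perm.eq_of_pairwise' (Finset.pairwise_sort _ _)
      (List.Pairwise.orderedInsert _ _ (Finset.pairwise_sort _ _)) hperm
  refine ⟨l.takeWhile fun c => ¬ i ≤ c, l.dropWhile fun c => ¬ i ≤ c, ?_, ?_, ?_, ?_⟩
  · exact fun hm => hiw (List.takeWhile_subset _ hm)
  · exact fun hm => hiw (List.dropWhile_subset _ hm)
  · exact (List.takeWhile_append_dropWhile).symm
  · rw [heq, List.orderedInsert_eq_take_drop]

lemma symmDiff_singleton_right (u : Finset (Fin n)) (i : Fin n) :
    symmDiff u {i} = if i ∈ u then u.erase i else insert i u := by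
  split_ifs with h <;> ext j <;>
    simp [Finset.mem_symmDiff, Finset.mem_erase, Finset.mem_insert] <;>
    by_cases hj : j = i <;> simp_all <;> tauto

lemma neg_one_pow_pm (k : ℕ) : ((-1 : F) ^ k = 1 ∨ (-1 : F) ^ k = -1) := by
  rcases Nat.even_or_odd k with he | ho
  · exact Or.inl he.neg_one_pow
  · exact Or.inr ho.neg_one_pow

section
include horth

lemma iota_eI_not_mem {i : Fin n} {u : Finset (Fin n)} (h : i ∉ u) :
    ∃ c : F, (c = 1 ∨ c = -1) ∧
      ι Qf (b i) * eI' Qf b u = c • eI' Qf b (insert i u) := by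
  obtain ⟨l₁, l₂, hi1, hi2, hw, hins⟩ := sortInsert h
  refine ⟨(-1) ^ l₁.length, neg_one_pow_pm _, ?_⟩
  rw [eI', eI', hins, hw, pι_append, pι_append, pι_cons, ← mul_assoc,
    lemA Qf b horth hi1, smul_mul_assoc, mul_assoc]

lemma iota_eI_swap_not_mem {i : Fin n} {u : Finset (Fin n)} (h : i ∉ u) :
    ι Qf (b i) * eI' Qf b u = ((-1 : F) ^ u.card) • (eI' Qf b u * ι Qf (b i)) := by
  have hl : i ∉ u.sort (· ≤ ·) := by simp [h]
  have := lemA Qf b horth hl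
  rwa [Finset.length_sort] at this

lemma iota_eI_mem {i : Fin n} {u : Finset (Fin n)} (h : i ∈ u) :
    ∃ c d : F, (c = 1 ∨ c = -1) ∧ (d = 1 ∨ d = -1) ∧
      ι Qf (b i) * eI' Qf b u = (c * Qf (b i)) • eI' Qf b (u.erase i) ∧
      eI' Qf b u * ι Qf (b i) = (d * Qf (b i)) • eI' Qf b (u.erase i) := by
  obtain ⟨l₁, l₂, hi1, hi2, hw, hins⟩ := sortInsert (Finset.notMem_erase i u)
  rw [Finset.insert_erase h] at hins
  refine ⟨(-1) ^ l₁.length, (-1) ^ l₂.length, neg_one_pow_pm _, neg_one_pow_pm _, ?_, ?_⟩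
  · rw [eI', eI', hins, hw, pι_append, pι_cons, pι_append, ← mul_assoc,
      lemA Qf b horth hi1, smul_mul_assoc, mul_assoc, ← mul_assoc (ι Qf (b i)),
      ι_sq_scalar, ← Algebra.smul_def, mul_smul_comm, smul_smul]
  · rw [eI', eI', hins, hw, pι_append, pι_cons, pι_append,
      lemA Qf b horth hi2, mul_smul_comm, smul_mul_assoc, mul_assoc, mul_assoc,
      ι_sq_scalar, ← Algebra.commutes, ← Algebra.smul_def, mul_smul_comm,
      smul_smul]

lemma eI_iota_swap (i : Fin n) (u : Finset (Fin n)) :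
    ∃ ε : F, (ε = 1 ∨ ε = -1) ∧
      eI' Qf b u * ι Qf (b i) = ε • (ι Qf (b i) * eI' Qf b u) := by
  by_cases h : i ∈ u
  · obtain ⟨c, d, hc, hd, h1, h2⟩ := iota_eI_mem Qf b horth h
    refine ⟨d * c, ?_, ?_⟩
    · rcases hc with hc | hc <;> rcases hd with hd | hd <;> simp [hc, hd]
    · rw [h1, h2, smul_smul]
      congr 1
      rcases hc with hc | hc <;> rcases hd with hd | hd <;> subst hc hd <;> ring
  · have := iota_eI_swap_not_mem Qf b horth h
    refine ⟨(-1) ^ u.card, neg_one_pow_pm _, ?_⟩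
    rw [this, smul_smul, ← pow_add, ← two_mul, pow_mul]
    norm_num

lemma eI_pι_swap (l : List (Fin n)) (u : Finset (Fin n)) :
    ∃ ε : F, (ε = 1 ∨ ε = -1) ∧
      eI' Qf b u * pι Qf b l = ε • (pι Qf b l * eI' Qf b u) := by
  induction l with
  | nil => exact ⟨1, Or.inl rfl, by simp⟩
  | cons i l ih =>
    obtain ⟨ε₂, hε₂, h₂⟩ := ih
    obtain ⟨ε₁, hε₁, h₁⟩ := eI_iota_swap Qf b horth i u
    refine ⟨ε₁ * ε₂, ?_, ?_⟩
    · rcases hε₁ with h | h <;> rcases hε₂ with h' | h' <;> simp [h, h']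
    · rw [pι_cons, ← mul_assoc, h₁, smul_mul_assoc, mul_assoc, h₂,
        mul_smul_comm, ← mul_assoc, smul_smul]

/-- commutation of two monomials up to sign -/
lemma eI_eI_swap (s u : Finset (Fin n)) :
    ∃ ε : F, (ε = 1 ∨ ε = -1) ∧
      eI' Qf b u * eI' Qf b s = ε • (eI' Qf b s * eI' Qf b u) := by
  simpa [eI'] using eI_pι_swap Qf b horth (s.sort (· ≤ ·)) u

end


/-- fold a word down to its support set -/
def gset (l : List (Fin n)) : Finset (Fin n) :=
  l.foldr (fun i u => symmDiff {i} u) ∅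

@[simp] lemma gset_nil : gset ([] : List (Fin n)) = ∅ := rfl
@[simp] lemma gset_cons (i : Fin n) (l : List (Fin n)) :
    gset (i :: l) = symmDiff {i} (gset l) := rfl

lemma gset_append (l m : List (Fin n)) :
    gset (l ++ m) = symmDiff (gset l) (gset m) := by
  induction l with
  | nil => exact (bot_symmDiff _).symm
  | cons i l ih => simp [ih, symmDiff_assoc]

lemma gset_nodup {l : List (Fin n)} (h : l.Nodup) : gset l = l.toFinset := by
  induction l with
  | nil => simp
  | cons i l ih =>
    have hi : i ∉ l.toFinset := by simpa using (List.nodup_cons.mp h).1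
    rw [gset_cons, ih (List.nodup_cons.mp h).2, List.toFinset_cons]
    ext j
    by_cases hj : j = i <;> simp [Finset.mem_symmDiff, hj, hi] <;> intro hmem <;>
      simp_all

lemma gset_sort (s : Finset (Fin n)) : gset (s.sort (· ≤ ·)) = s := by
  rw [gset_nodup (s.sort_nodup (· ≤ ·)), Finset.sort_toFinset]

section
include horth

lemma reduce (hq : ∀ j, Qf (b j) ≠ 0) (l : List (Fin n)) :
    ∃ c : F, c ≠ 0 ∧ pι Qf b l = c • eI' Qf b (gset l) := by
  induction l with
  | nil =>
    refine ⟨1, one_ne_zero, ?_⟩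
    simp [eI', pι]
  | cons i l ih =>
    obtain ⟨c, hc, hpl⟩ := ih
    rw [pι_cons, hpl, mul_smul_comm]
    by_cases h : i ∈ gset l
    · obtain ⟨c', d', hc', _, h1, _⟩ := iota_eI_mem Qf b horth h
      refine ⟨c * (c' * Qf (b i)), ?_, ?_⟩
      · refine mul_ne_zero hc (mul_ne_zero ?_ (hq i))
        rcases hc' with h' | h' <;> rw [h'] <;> simp
      · rw [h1, smul_smul]
        congr 2
        rw [gset_cons, symmDiff_comm, symmDiff_singleton_right, if_pos h]
    · obtain ⟨c', hc', h1⟩ := iota_eI_not_mem Qf b horth h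
      refine ⟨c * c', ?_, ?_⟩
      · refine mul_ne_zero hc ?_
        rcases hc' with h' | h' <;> rw [h'] <;> simp
      · rw [h1, smul_smul]
        congr 2
        rw [gset_cons, symmDiff_comm, symmDiff_singleton_right, if_neg h]

lemma eI_mul_eI (hq : ∀ j, Qf (b j) ≠ 0) (s t : Finset (Fin n)) :
    ∃ c : F, c ≠ 0 ∧ eI' Qf b s * eI' Qf b t = c • eI' Qf b (symmDiff s t) := by
  obtain ⟨c, hc, h⟩ := reduce Qf b horth hq (s.sort (· ≤ ·) ++ t.sort (· ≤ ·))
  rw [pι_append] at h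
  refine ⟨c, hc, ?_⟩
  rw [eI', eI', h, gset_append, gset_sort, gset_sort]

end

/-! ### The Fock representation, for linear independence of monomials -/

/-- number of elements of `u` smaller than `i` -/
def cnt (i : Fin n) (u : Finset (Fin n)) : ℕ := (u.filter (· < i)).card

/-- coefficient of the action of the `i`-th generator on the basis vector `u` -/
noncomputable def coef (Qf : QuadraticForm F V) (b : Module.Basis (Fin n) F V)
    (i : Fin n) (u : Finset (Fin n)) : F :=
  (-1) ^ (cnt i u) * (if i ∈ u then Qf (b i) else 1)

abbrev Fock (F : Type*) (n : ℕ) := Finset (Fin n) → F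

noncomputable def bM : Module.Basis (Finset (Fin n)) F (Fock F n) := Pi.basisFun F _

/-- action of the `i`-th generator on Fock space -/
noncomputable def opd (Qf : QuadraticForm F V) (b : Module.Basis (Fin n) F V) (i : Fin n) :
    Module.End F (Fock F n) :=
  (bM (F := F) (n := n)).constr F fun u => coef Qf b i u • bM (symmDiff u {i})

lemma opd_apply (i : Fin n) (u : Finset (Fin n)) :
    opd Qf b i (bM u) = coef Qf b i u • (bM (symmDiff u {i}) : Fock F n) :=
  Module.Basis.constr_basis _ _ _ _

lemma cnt_symmDiff (i j : Fin n) (u : Finset (Fin n)) :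
    ((-1 : F) ^ (cnt i (symmDiff u {j}))) =
      (-1) ^ (cnt i u) * (if j < i ∧ j ∉ u then -1 else 1) *
        (if j < i ∧ j ∈ u then -1 else 1) := by
  rw [symmDiff_singleton_right]
  by_cases h : j ∈ u
  · rw [if_pos h]
    have hcard : cnt i u = cnt i (u.erase j) + (if j < i then 1 else 0) := by
      unfold cnt
      have : u.filter (· < i) = if j < i then insert j ((u.erase j).filter (· < i))
          else (u.erase j).filter (· < i) := by
        conv_lhs => rw [← Finset.insert_erase h]
        rw [Finset.filter_insert]
      rw [this]
      split_ifs with hj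
      · rw [Finset.card_insert_of_notMem (by simp)]
      · simp
    rw [hcard, pow_add]
    split_ifs with h1 h2 <;> simp_all <;> ring
  · rw [if_neg h]
    have hcard : cnt i (insert j u) = cnt i u + (if j < i then 1 else 0) := by
      unfold cnt
      rw [Finset.filter_insert]
      split_ifs with hj
      · rw [Finset.card_insert_of_notMem (by simp [h])]
      · simp
    rw [hcard, pow_add]
    split_ifs with h1 h2 <;> simp_all <;> ring

lemma mem_symmDiff_singleton {i j : Fin n} (hij : i ≠ j) (u : Finset (Fin n)) :
    (i ∈ symmDiff u {j}) ↔ i ∈ u := by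
  simp [Finset.mem_symmDiff, hij]

lemma coef_anticomm {i j : Fin n} (hij : i ≠ j) (u : Finset (Fin n)) :
    coef Qf b j u * coef Qf b i (symmDiff u {j}) =
      -(coef Qf b i u * coef Qf b j (symmDiff u {i})) := by
  unfold coef
  rw [cnt_symmDiff (F := F) i j u, cnt_symmDiff (F := F) j i u,
    if_congr (mem_symmDiff_singleton hij u) rfl rfl,
    if_congr (mem_symmDiff_singleton hij.symm u) rfl rfl]
  rcases lt_or_gt_of_ne hij with hlt | hlt
  · have h1 : ¬ (j < i) := not_lt.mpr hlt.le
    simp only [hlt, h1, false_and, if_false, true_and]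
    by_cases h : i ∈ u <;> by_cases h' : j ∈ u <;> simp [h, h'] <;> ring
  · have h1 : ¬ (i < j) := not_lt.mpr hlt.le
    simp only [hlt, h1, false_and, if_false, true_and]
    by_cases h : i ∈ u <;> by_cases h' : j ∈ u <;> simp [h, h'] <;> ring

lemma opd_anticomm {i j : Fin n} (hij : i ≠ j) :
    opd Qf b i * opd Qf b j = -(opd Qf b j * opd Qf b i) := by
  apply (bM (F := F) (n := n)).ext
  intro u
  have hs : symmDiff (symmDiff u {j}) {i} = symmDiff (symmDiff u {i}) {j} :=
    symmDiff_right_comm u {j} {i}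
  show opd Qf b i (opd Qf b j (bM u)) = -(opd Qf b j (opd Qf b i (bM u)))
  rw [opd_apply, map_smul, opd_apply, opd_apply, map_smul, opd_apply,
    smul_smul, smul_smul, hs, coef_anticomm Qf b hij u, neg_smul]

lemma opd_sq (i : Fin n) :
    opd Qf b i * opd Qf b i = algebraMap F (Module.End F (Fock F n)) (Qf (b i)) := by
  apply (bM (F := F) (n := n)).ext
  intro u
  show opd Qf b i (opd Qf b i (bM u)) = _
  rw [opd_apply, map_smul, opd_apply, smul_smul, symmDiff_symmDiff_cancel_right,
    Module.algebraMap_end_apply]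
  congr 1
  unfold coef
  rw [cnt_symmDiff (F := F) i i u,
    if_congr (Finset.mem_symmDiff.trans (by simp [Finset.mem_symmDiff]) :
      (i ∈ symmDiff u {i}) ↔ i ∉ u) rfl rfl]
  by_cases h : i ∈ u <;> simp [h, lt_irrefl] <;> ring_nf <;>
    rw [mul_comm (cnt i u) 2, pow_mul] <;> norm_num

section
include horth

lemma Qf_expand (v : V) :
    Qf v = ∑ i, (b.repr v i) * (b.repr v i) * Qf (b i) := by
  conv_lhs => rw [← Module.Basis.sum_repr b v]
  rw [QuadraticMap.map_sum]
  have h0 : ∀ ij ∈ Finset.filter (fun ij => ¬ ij.IsDiag) Finset.univ.sym2,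
      Sym2.lift ⟨fun i j => QuadraticMap.polar (⇑Qf) (b.repr v i • b i) (b.repr v j • b j),
        fun _ _ => QuadraticMap.polar_comm _ _ _⟩ ij = 0 := by
    intro ij hij
    induction ij with
    | _ i j =>
      have hnd : i ≠ j := by
        intro h
        exact (Finset.mem_filter.mp hij).2 (Sym2.mk_isDiag_iff.mpr h)
      rw [Sym2.lift_mk]
      show QuadraticMap.polar (⇑Qf) (b.repr v i • b i) (b.repr v j • b j) = 0
      rw [QuadraticMap.polar_smul_left, QuadraticMap.polar_smul_right,
        horth i j hnd]
      simp
  rw [Finset.sum_eq_zero (fun ij (hij : ij ∈ Finset.filter (fun ij => ¬ ij.IsDiag) Finset.univ.sym2) => by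
    induction ij with | _ i j => rw [← h0 _ hij]; rfl), add_zero]
  refine Finset.sum_congr rfl fun i _ => ?_
  rw [QuadraticMap.map_smul, smul_eq_mul]

lemma hf_cond (v : V) :
    (b.constr F fun i => opd Qf b i) v * (b.constr F fun i => opd Qf b i) v =
      algebraMap F (Module.End F (Fock F n)) (Qf v) := by
  rw [Module.Basis.constr_apply_fintype, Finset.sum_mul_sum]
  have hterm : ∀ i j : Fin n,
      (b.equivFun v i • opd Qf b i) * (b.equivFun v j • opd Qf b j) =
        (b.equivFun v i * b.equivFun v j) • (opd Qf b i * opd Qf b j) := by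
    intro i j
    rw [smul_mul_assoc, mul_smul_comm, smul_smul]
  have split : ∀ i : Fin n, ∑ j : Fin n,
      (b.equivFun v i • opd Qf b i) * (b.equivFun v j • opd Qf b j) =
      (b.equivFun v i * b.equivFun v i) • (opd Qf b i * opd Qf b i) +
        ∑ j ∈ Finset.univ.erase i,
          (b.equivFun v i * b.equivFun v j) • (opd Qf b i * opd Qf b j) := by
    intro i
    rw [← Finset.add_sum_erase _ _ (Finset.mem_univ i), hterm]
    congr 1
    exact Finset.sum_congr rfl fun j _ => hterm i j
  rw [Finset.sum_congr rfl fun i _ => split i, Finset.sum_add_distrib]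
  have hoff : ∑ i : Fin n, ∑ j ∈ Finset.univ.erase i,
      (b.equivFun v i * b.equivFun v j) • (opd Qf b i * opd Qf b j) = 0 := by
    rw [Finset.sum_sigma' (Finset.univ) (fun i => Finset.univ.erase i)
      (fun i j => (b.equivFun v i * b.equivFun v j) • (opd Qf b i * opd Qf b j))]
    refine Finset.sum_involution (fun p _ => ⟨p.2, p.1⟩) ?_ ?_ ?_ ?_
    · intro p hp
      have hne : p.2 ≠ p.1 := by
        have := Finset.mem_sigma.mp hp
        exact (Finset.ne_of_mem_erase this.2)
      show (b.equivFun v p.1 * b.equivFun v p.2) • (opd Qf b p.1 * opd Qf b p.2) +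
        (b.equivFun v p.2 * b.equivFun v p.1) • (opd Qf b p.2 * opd Qf b p.1) = 0
      rw [opd_anticomm Qf b hne.symm, smul_neg,
        mul_comm (b.equivFun v p.2) (b.equivFun v p.1)]
      exact neg_add_cancel _
    · intro p hp _
      have hne : p.2 ≠ p.1 := Finset.ne_of_mem_erase (Finset.mem_sigma.mp hp).2
      intro hcontra
      exact hne (congrArg Sigma.fst hcontra)
    · intro p hp
      have hne : p.2 ≠ p.1 := Finset.ne_of_mem_erase (Finset.mem_sigma.mp hp).2
      exact Finset.mem_sigma.mpr ⟨Finset.mem_univ _, Finset.mem_erase.mpr ⟨hne.symm, Finset.mem_univ _⟩⟩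
    · intro p hp
      rfl
  rw [hoff, add_zero, Qf_expand Qf b horth v, map_sum]
  refine Finset.sum_congr rfl fun i _ => ?_
  rw [opd_sq, Algebra.smul_def, ← map_mul, Module.Basis.equivFun_apply]

/-- the Fock representation -/
noncomputable def repCl : CliffordAlgebra Qf →ₐ[F] Module.End F (Fock F n) :=
  CliffordAlgebra.lift Qf ⟨b.constr F fun i => opd Qf b i, hf_cond Qf b horth⟩

lemma repCl_iota (i : Fin n) : repCl Qf b horth (ι Qf (b i)) = opd Qf b i := by
  rw [repCl, CliffordAlgebra.lift_ι_apply, Module.Basis.constr_basis]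

lemma repCl_pι_sorted : ∀ l : List (Fin n), l.Pairwise (· < ·) →
    repCl Qf b horth (pι Qf b l) (bM ∅) = (bM l.toFinset : Fock F n) := by
  intro l
  induction l with
  | nil => intro _; simp [pι]
  | cons i l ih =>
    intro hsort
    have hlt : ∀ j ∈ l, i < j := fun j hj => (List.pairwise_cons.mp hsort).1 j hj
    have htail := ih (List.pairwise_cons.mp hsort).2
    rw [pι_cons, map_mul]
    show repCl Qf b horth (ι Qf (b i)) (repCl Qf b horth (pι Qf b l) (bM ∅)) = _
    rw [htail, repCl_iota, opd_apply]
    have hmem : i ∉ l.toFinset := by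
      intro hmem
      exact lt_irrefl i (hlt i (List.mem_toFinset.mp hmem))
    have hcnt : cnt i l.toFinset = 0 := by
      unfold cnt
      rw [Finset.card_eq_zero, Finset.filter_eq_empty_iff]
      intro j hj
      exact not_lt.mpr (hlt j (List.mem_toFinset.mp hj)).le
    have hcoef : coef Qf b i l.toFinset = 1 := by
      unfold coef
      rw [hcnt, if_neg hmem, pow_zero, one_mul]
    rw [hcoef, one_smul, List.toFinset_cons]
    congr 1
    rw [symmDiff_singleton_right, if_neg hmem]

lemma repCl_eI (u : Finset (Fin n)) :
    repCl Qf b horth (eI' Qf b u) (bM ∅) = (bM u : Fock F n) := by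
  rw [eI', repCl_pι_sorted Qf b horth _ ((Finset.sortedLT_sort u).pairwise)]
  congr 1
  exact Finset.sort_toFinset _ _

lemma eI_linearIndependent : LinearIndependent F (fun u => eI' Qf b u) := by
  let T : CliffordAlgebra Qf →ₗ[F] Fock F n :=
    { toFun := fun x => repCl Qf b horth x (bM ∅)
      map_add' := fun x y => by
        show repCl Qf b horth (x + y) (bM ∅) = _
        rw [map_add, LinearMap.add_apply]
      map_smul' := fun c x => by
        show repCl Qf b horth (c • x) (bM ∅) = _
        rw [map_smul, LinearMap.smul_apply, RingHom.id_apply] }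
  refine LinearIndependent.of_comp T ?_
  have : (⇑T ∘ fun u => eI' Qf b u) = fun u => (bM u : Fock F n) := by
    funext u
    exact repCl_eI Qf b horth u
  rw [this]
  exact (bM (F := F) (n := n)).linearIndependent

end

section
include horth

lemma pι_nodup : ∀ {l : List (Fin n)}, l.Nodup →
    ∃ ε : F, (ε = 1 ∨ ε = -1) ∧ pι Qf b l = ε • eI' Qf b l.toFinset := by
  intro l
  induction l with
  | nil => intro _; exact ⟨1, Or.inl rfl, by simp⟩
  | cons i l ih =>
    intro h
    obtain ⟨ε, hε, hp⟩ := ih (List.nodup_cons.mp h).2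
    have hmem : i ∉ l.toFinset := by simpa using (List.nodup_cons.mp h).1
    obtain ⟨c, hc, h1⟩ := iota_eI_not_mem Qf b horth hmem
    refine ⟨ε * c, ?_, ?_⟩
    · rcases hε with h' | h' <;> rcases hc with h'' | h'' <;> simp [h', h'']
    · rw [pι_cons, hp, mul_smul_comm, h1, smul_smul, List.toFinset_cons, mul_comm]

lemma eI_span (hq : ∀ j, Qf (b j) ≠ 0) :
    Submodule.span F (Set.range (fun u => eI' Qf b u)) = ⊤ := by
  rw [eq_top_iff]
  rintro x -
  set S := Submodule.span F (Set.range (fun u => eI' Qf b u)) with hS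
  induction x using CliffordAlgebra.induction with
  | algebraMap r =>
    rw [Algebra.algebraMap_eq_smul_one]
    exact S.smul_mem r (Submodule.subset_span ⟨∅, eI'_empty Qf b⟩)
  | ι v =>
    rw [← Module.Basis.sum_repr b v, map_sum]
    refine S.sum_mem fun i _ => ?_
    rw [map_smul]
    exact S.smul_mem _ (Submodule.subset_span ⟨{i}, eI'_singleton Qf b i⟩)
  | mul x y hx hy =>
    have hSS : S * S ≤ S := by
      rw [hS, Submodule.span_mul_span, Submodule.span_le]
      rintro z ⟨x', ⟨u, rfl⟩, y', ⟨w, rfl⟩, rfl⟩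
      obtain ⟨c, _, hc⟩ := eI_mul_eI Qf b horth hq u w
      show eI' Qf b u * eI' Qf b w ∈
        (Submodule.span F (Set.range fun u => eI' Qf b u) : Set (CliffordAlgebra Qf))
      rw [hc]
      exact Submodule.smul_mem _ c (Submodule.subset_span ⟨_, rfl⟩)
    exact hSS (Submodule.mul_mem_mul hx hy)
  | add x y hx hy => exact S.add_mem hx hy

/-- the monomial basis of the Clifford algebra -/
noncomputable def basCl (hq : ∀ j, Qf (b j) ≠ 0) :
    Module.Basis (Finset (Fin n)) F (CliffordAlgebra Qf) :=
  Module.Basis.mk (eI_linearIndependent Qf b horth) (le_of_eq (eI_span Qf b horth hq).symm)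

@[simp] lemma basCl_apply (hq : ∀ j, Qf (b j) ≠ 0) (u : Finset (Fin n)) :
    basCl Qf b horth hq u = eI' Qf b u := Module.Basis.mk_apply _ _ _

lemma eI_ne_zero (u : Finset (Fin n)) : eI' Qf b u ≠ 0 :=
  (eI_linearIndependent Qf b horth).ne_zero u

/-- conjugation acts diagonally on monomials -/
lemma cconj_eI (u : Finset (Fin n)) : ∃ γ : F, (γ = 1 ∨ γ = -1) ∧
    cconj Qf (eI' Qf b u) = γ • eI' Qf b u := by
  have hrev : reverse (Q := Qf) (eI' Qf b u) =
      pι Qf b ((u.sort (· ≤ ·)).reverse) := by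
    have h := reverse_prod_map_ι (Q := Qf) ((u.sort (· ≤ ·)).map b)
    rw [List.map_map, ← List.map_reverse] at h
    exact h
  have hnodup : ((u.sort (· ≤ ·)).reverse).Nodup :=
    List.nodup_reverse.mpr (u.sort_nodup (· ≤ ·))
  obtain ⟨ε, hε, hp⟩ := pι_nodup Qf b horth hnodup
  have htf : ((u.sort (· ≤ ·)).reverse).toFinset = u := by
    rw [List.toFinset_reverse, Finset.sort_toFinset]
  have hinv : involute (eI' Qf b u) = ((-1 : F) ^ u.card) • eI' Qf b u := by
    have h := involute_prod_map_ι (Q := Qf) ((u.sort (· ≤ ·)).map b)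
    rw [List.map_map, List.length_map, Finset.length_sort] at h
    exact h
  refine ⟨(-1) ^ u.card * ε, ?_, ?_⟩
  · rcases hε with h | h <;> rcases neg_one_pow_pm (F := F) u.card with h' | h' <;>
      rw [h, h'] <;> norm_num
  · show involute (reverse (Q := Qf) (eI' Qf b u)) = _
    rw [hrev, hp, htf, map_smul, hinv, smul_smul, mul_comm]

end

section
include horth

lemma repr_sum_eval (hq : ∀ j, Qf (b j) ≠ 0) (c : Finset (Fin n) → F) (u : Finset (Fin n)) :
    (basCl Qf b horth hq).repr (∑ v, c v • eI' Qf b v) u = c u := by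
  classical
  have : (∑ v, c v • eI' Qf b v) = ∑ v, c v • (basCl Qf b horth hq) v := by
    refine Finset.sum_congr rfl fun v _ => by rw [basCl_apply]
  rw [this, map_sum]
  rw [Finsupp.finset_sum_apply]
  rw [Finset.sum_eq_single u]
  · rw [map_smul, Module.Basis.repr_self, Finsupp.smul_apply, Finsupp.single_eq_same,
      smul_eq_mul, mul_one]
  · intro v _ hvu
    rw [map_smul, Module.Basis.repr_self, Finsupp.smul_apply, Finsupp.single_eq_of_ne hvu.symm,
      smul_eq_mul, mul_zero]
  · intro h
    exact absurd (Finset.mem_univ u) h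

lemma repr_basis_vec (hq : ∀ j, Qf (b j) ≠ 0) (D u : Finset (Fin n)) :
    (basCl Qf b horth hq).repr (eI' Qf b D) u = if D = u then 1 else 0 := by
  rw [← basCl_apply Qf b horth hq D, Module.Basis.repr_self, Finsupp.single_apply]

end

end Stmt18Aux


open Stmt18Aux in
theorem stmt18 {F V : Type*} [Field F] [AddCommGroup V] [Module F V]
    [FiniteDimensional F V] (h2 : (2 : F) ≠ 0)
    (B : LinearMap.BilinForm F V)
    (hsymm : ∀ v w : V, B v w = B w v)
    (hnd : ∀ v : V, (∀ w : V, B v w = 0) → v = 0)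
    (Qf : QuadraticForm F V) (hQ : ∀ v : V, Qf v = -(B v v))
    {n : ℕ} (b : Module.Basis (Fin n) F V)
    (hortho : ∀ i j : Fin n, i ≠ j → B (b i) (b j) = 0)
    (ad : CliffordAlgebra Qf → (Gsub Qf →ₗ[F] Gsub Qf))
    (had : ∀ (ξ : CliffordAlgebra Qf) (x : Gsub Qf),
      ((ad ξ x : CliffordAlgebra Qf)) = ξ * (x : CliffordAlgebra Qf) - (x : CliffordAlgebra Qf) * ξ)
    (s t : Finset (Fin n))
    (hs : cconj Qf (eI Qf b s) = -(eI Qf b s))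
    (ht : cconj Qf (eI Qf b t) = -(eI Qf b t)) :
    (s ≠ t → LinearMap.trace F (Gsub Qf) (ad (eI Qf b s) ∘ₗ ad (eI Qf b t)) = 0) ∧
    (∀ (u : Finset (Fin n)) (ζ : Gsub Qf), (ζ : CliffordAlgebra Qf) = eI Qf b u →
      ((ad (eI Qf b s) (ad (eI Qf b s) ζ) : CliffordAlgebra Qf) = 0 ∨
       (ad (eI Qf b s) (ad (eI Qf b s) ζ) : CliffordAlgebra Qf)
         = (4 : F) • (eI Qf b s * eI Qf b s * eI Qf b u))) ∧
    algebraMap F (CliffordAlgebra Qf)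
        (LinearMap.trace F (Gsub Qf) (ad (eI Qf b s) ∘ₗ ad (eI Qf b s)))
      = (4 * ((Set.ncard {u : Finset (Fin n) | ∃ ζ : Gsub Qf,
            (ζ : CliffordAlgebra Qf) = eI Qf b u ∧
            (ad (eI Qf b s) (ad (eI Qf b s) ζ) : CliffordAlgebra Qf) ≠ 0} : ℕ) : F))
          • (eI Qf b s * eI Qf b s) := by
  classical
  -- orthogonality for the polar form
  have horth : ∀ i j : Fin n, i ≠ j → QuadraticMap.polar (⇑Qf) (b i) (b j) = 0 := by
    intro i j hij
    have hp : QuadraticMap.polar (⇑Qf) (b i) (b j)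
        = Qf (b i + b j) - Qf (b i) - Qf (b j) := rfl
    rw [hp, hQ, hQ, hQ]
    simp only [map_add, LinearMap.add_apply, hortho i j hij, hortho j i hij.symm]
    ring
  -- nondegeneracy on basis vectors
  have hq : ∀ i : Fin n, Qf (b i) ≠ 0 := by
    intro i h
    have hBii : B (b i) (b i) = 0 := by
      rw [hQ] at h; exact neg_eq_zero.mp h
    refine b.ne_zero i (hnd _ fun w => ?_)
    rw [← Module.Basis.sum_repr b w, map_sum]
    refine Finset.sum_eq_zero fun j _ => ?_
    rw [map_smul, smul_eq_mul]
    by_cases hj : j = i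
    · rw [hj, hBii, mul_zero]
    · rw [hortho i j (Ne.symm hj), mul_zero]
  -- commutation signs
  choose ε hε1 hε0 using fun u => eI_eI_swap Qf b horth s u
  have hε2 : ∀ u, eI Qf b u * eI Qf b s = ε u • (eI Qf b s * eI Qf b u) := fun u => hε0 u
  -- the square of e_s is the scalar cs
  obtain ⟨cs, hcs0, hcs⟩ := eI_mul_eI Qf b horth hq s s
  rw [symmDiff_self] at hcs
  have hcs1 : eI Qf b s * eI Qf b s = cs • (1 : CliffordAlgebra Qf) := by
    have h1 : eI Qf b s * eI Qf b s = cs • eI' Qf b (⊥ : Finset (Fin n)) := hcs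
    rw [h1, show (⊥ : Finset (Fin n)) = (∅ : Finset (Fin n)) from rfl, eI'_empty]
  -- bridge lemmas between eI and eI'
  have hrepr_sum : ∀ (c : Finset (Fin n) → F) (u : Finset (Fin n)),
      (basCl Qf b horth hq).repr (∑ v, c v • eI Qf b v) u = c u :=
    fun c u => repr_sum_eval Qf b horth hq c u
  have hrepr_vec : ∀ (D u : Finset (Fin n)),
      (basCl Qf b horth hq).repr (eI Qf b D) u = if D = u then 1 else 0 :=
    fun D u => repr_basis_vec Qf b horth hq D u
  have hEne : ∀ u : Finset (Fin n), eI Qf b u ≠ 0 := fun u => eI_ne_zero Qf b horth u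
  -- the key computation of (ad e_s)^2 on monomials
  have key : ∀ (u : Finset (Fin n)) (ζ : Gsub Qf), (ζ : CliffordAlgebra Qf) = eI Qf b u →
      ((ad (eI Qf b s) (ad (eI Qf b s) ζ) : Gsub Qf) : CliffordAlgebra Qf)
        = ((1 - ε u) ^ 2 * cs) • eI Qf b u := by
    intro u ζ hζ
    have h1 := had (eI Qf b s) ζ
    rw [hζ, hε2 u] at h1
    have h1' : ((ad (eI Qf b s) ζ : Gsub Qf) : CliffordAlgebra Qf)
        = (1 - ε u) • (eI Qf b s * eI Qf b u) := by
      rw [h1, sub_smul, one_smul]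
    have h2 := had (eI Qf b s) (ad (eI Qf b s) ζ)
    rw [h1', mul_smul_comm, smul_mul_assoc] at h2
    have h3 : (eI Qf b s * eI Qf b u) * eI Qf b s
        = ε u • (eI Qf b s * (eI Qf b s * eI Qf b u)) := by
      rw [mul_assoc, hε2 u, mul_smul_comm]
    rw [h3, smul_smul, ← sub_smul, ← mul_assoc, hcs1, smul_mul_assoc, one_mul,
      smul_smul] at h2
    rw [h2]
    congr 1
    ring
  -- membership in G
  have hmemG : ∀ x : CliffordAlgebra Qf, x ∈ Gsub Qf ↔ cconj Qf x = -x := by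
    intro x
    rw [Gsub, LinearMap.mem_ker, LinearMap.add_apply, LinearMap.id_apply,
      add_eq_zero_iff_eq_neg]
  set P : Finset (Fin n) → Prop := fun u => eI Qf b u ∈ Gsub Qf with hPdef
  have hnotP : ∀ u : Finset (Fin n), ¬ P u → cconj Qf (eI Qf b u) = eI Qf b u := by
    intro u hu
    obtain ⟨γ, hγ, hc0⟩ := cconj_eI Qf b horth u
    have hc : cconj Qf (eI Qf b u) = γ • eI Qf b u := hc0
    rcases hγ with h | h
    · rw [hc, h, one_smul]
    · exfalso
      refine hu ((hmemG _).mpr ?_)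
      rw [hc, h, neg_smul, one_smul]
  -- the basis of G given by monomials in G
  set w : {u : Finset (Fin n) // P u} → Gsub Qf := fun u => ⟨eI Qf b u.1, u.2⟩ with hwdef
  have hw_indep : LinearIndependent F w := by
    refine LinearIndependent.of_comp (Gsub Qf).subtype ?_
    exact (eI_linearIndependent Qf b horth).comp Subtype.val Subtype.val_injective
  have hcoe_sum : ∀ (c : {u : Finset (Fin n) // P u} → F),
      ((∑ v, c v • w v : Gsub Qf) : CliffordAlgebra Qf)
        = ∑ v, c v • eI Qf b v.1 := by
    intro c
    rw [Submodule.coe_sum]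
    exact Finset.sum_congr rfl fun v _ => by rw [SetLike.val_smul]
  have hw_span : ⊤ ≤ Submodule.span F (Set.range w) := by
    rintro x -
    have hx : cconj Qf (x : CliffordAlgebra Qf) = -(x : CliffordAlgebra Qf) :=
      (hmemG _).mp x.2
    set a : Finset (Fin n) → F :=
      fun u => (basCl Qf b horth hq).repr (x : CliffordAlgebra Qf) u with hadef
    have hsum : (x : CliffordAlgebra Qf) = ∑ u, a u • eI Qf b u := by
      conv_lhs => rw [← Module.Basis.sum_repr (basCl Qf b horth hq) (x : CliffordAlgebra Qf)]
      refine Finset.sum_congr rfl fun u _ => ?_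
      show (basCl Qf b horth hq).repr (x : CliffordAlgebra Qf) u • basCl Qf b horth hq u
        = a u • eI Qf b u
      rw [basCl_apply, hadef]
      rfl
    have hzero : ∀ u : Finset (Fin n), ¬ P u → a u = 0 := by
      intro u hu
      have hl : (basCl Qf b horth hq).repr (cconj Qf (x : CliffordAlgebra Qf)) u = a u := by
        have hcx : cconj Qf (x : CliffordAlgebra Qf)
            = ∑ v, (a v * (if P v then -1 else 1)) • eI Qf b v := by
          conv_lhs => rw [hsum]
          rw [map_sum]
          refine Finset.sum_congr rfl fun v _ => ?_
          rw [map_smul]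
          by_cases hv : P v
          · rw [if_pos hv, (hmemG _).mp hv, mul_neg_one, neg_smul, smul_neg]
          · rw [if_neg hv, hnotP v hv, mul_one]
        rw [hcx, hrepr_sum, if_neg hu, mul_one]
      have hr : (basCl Qf b horth hq).repr (-(x : CliffordAlgebra Qf)) u = -(a u) := by
        rw [map_neg]; rfl
      rw [hx, hr] at hl
      have h20 : (2 : F) * a u = 0 := by linear_combination -hl
      rcases mul_eq_zero.mp h20 with h | h
      · exact absurd h h2
      · exact h
    have hx2 : x = ∑ v : {u : Finset (Fin n) // P u}, a v.1 • w v := by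
      apply Subtype.ext
      rw [hcoe_sum, hsum,
        ← Finset.sum_filter_add_sum_filter_not Finset.univ P (fun u => a u • eI Qf b u)]
      have hz : ∑ u ∈ Finset.univ.filter (fun u => ¬ P u), a u • eI Qf b u = 0 := by
        refine Finset.sum_eq_zero fun u hu => ?_
        rw [hzero u (Finset.mem_filter.mp hu).2, zero_smul]
      rw [hz, add_zero]
      exact Finset.sum_subtype (Finset.univ.filter P)
        (fun u => by simp only [Finset.mem_filter, Finset.mem_univ, true_and])
        (fun u => a u • eI Qf b u)
    rw [hx2]
    exact Submodule.sum_mem _ fun v _ =>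
      Submodule.smul_mem _ _ (Submodule.subset_span (Set.mem_range_self v))
  set WB : Module.Basis {u : Finset (Fin n) // P u} F (Gsub Qf) := Module.Basis.mk hw_indep hw_span with hWB
  have hWBapply : ∀ u, WB u = w u := fun u => Module.Basis.mk_apply hw_indep hw_span u
  -- coordinates in WB agree with coordinates in basCl
  have hWrepr : ∀ (x : Gsub Qf) (u : {u : Finset (Fin n) // P u}),
      WB.repr x u = (basCl Qf b horth hq).repr (x : CliffordAlgebra Qf) u.1 := by
    intro x u
    conv_rhs => rw [← Module.Basis.sum_repr WB x]
    have hc : ((∑ v, WB.repr x v • WB v : Gsub Qf) : CliffordAlgebra Qf)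
        = ∑ v, WB.repr x v • eI Qf b v.1 := by
      rw [show (∑ v, WB.repr x v • WB v : Gsub Qf) = ∑ v, WB.repr x v • w v from
        Finset.sum_congr rfl fun v _ => by rw [hWBapply], hcoe_sum]
    rw [hc, map_sum, Finsupp.finset_sum_apply, Finset.sum_eq_single u]
    · rw [map_smul, Finsupp.smul_apply, hrepr_vec, if_pos rfl, smul_eq_mul, mul_one]
    · intro v _ hvu
      rw [map_smul, Finsupp.smul_apply, hrepr_vec,
        if_neg (fun h => hvu (Subtype.ext h)), smul_eq_mul, mul_zero]
    · intro h; exact absurd (Finset.mem_univ u) h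
  have htrace : ∀ T : Gsub Qf →ₗ[F] Gsub Qf, LinearMap.trace F (Gsub Qf) T
      = ∑ u : {u : Finset (Fin n) // P u},
          (basCl Qf b horth hq).repr ((T (w u) : Gsub Qf) : CliffordAlgebra Qf) u.1 := by
    intro T
    rw [LinearMap.trace_eq_matrix_trace F WB T, Matrix.trace]
    refine Finset.sum_congr rfl fun u _ => ?_
    rw [Matrix.diag_apply, LinearMap.toMatrix_apply, hWrepr, hWBapply]
  refine ⟨?_, ?_, ?_⟩
  · -- vanishing of off-diagonal traces
    intro hst
    rw [htrace]
    refine Finset.sum_eq_zero fun u _ => ?_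
    obtain ⟨c1, _, hc1⟩ := eI_mul_eI Qf b horth hq t u.1
    obtain ⟨c2, _, hc2⟩ := eI_mul_eI Qf b horth hq u.1 t
    rw [symmDiff_comm u.1 t] at hc2
    have hc1' : eI Qf b t * eI Qf b u.1 = c1 • eI Qf b (symmDiff t u.1) := hc1
    have hc2' : eI Qf b u.1 * eI Qf b t = c2 • eI Qf b (symmDiff t u.1) := hc2
    obtain ⟨c3, _, hc3⟩ := eI_mul_eI Qf b horth hq s (symmDiff t u.1)
    obtain ⟨c4, _, hc4⟩ := eI_mul_eI Qf b horth hq (symmDiff t u.1) s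
    rw [symmDiff_comm (symmDiff t u.1) s] at hc4
    have hc3' : eI Qf b s * eI Qf b (symmDiff t u.1)
        = c3 • eI Qf b (symmDiff s (symmDiff t u.1)) := hc3
    have hc4' : eI Qf b (symmDiff t u.1) * eI Qf b s
        = c4 • eI Qf b (symmDiff s (symmDiff t u.1)) := hc4
    have hwu : ((w u : Gsub Qf) : CliffordAlgebra Qf) = eI Qf b u.1 := rfl
    have h1 := had (eI Qf b t) (w u)
    rw [hwu, hc1', hc2', ← sub_smul] at h1
    have h2 := had (eI Qf b s) (ad (eI Qf b t) (w u))
    rw [h1, mul_smul_comm, smul_mul_assoc, hc3', hc4', smul_smul, smul_smul,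
      ← sub_smul, ← mul_sub] at h2
    rw [LinearMap.comp_apply, h2, map_smul, Finsupp.smul_apply, hrepr_vec,
      smul_eq_mul]
    have hne : symmDiff s (symmDiff t u.1) ≠ u.1 := by
      intro h
      have h6 : symmDiff (symmDiff s (symmDiff t u.1)) u.1 = symmDiff u.1 u.1 := by
        rw [h]
      rw [← symmDiff_assoc, symmDiff_symmDiff_cancel_right, symmDiff_self] at h6
      exact hst (symmDiff_eq_bot.mp h6)
    rw [if_neg hne, mul_zero]
  · -- the eigenvalue computation
    intro u ζ hζ
    rcases hε1 u with h | h
    · left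
      rw [key u ζ hζ, h]
      norm_num
    · right
      rw [key u ζ hζ, h, hcs1, smul_mul_assoc, one_mul, smul_smul]
      congr 1
      norm_num
  · -- the trace of (ad e_s)^2
    have h1m1 : (1 : F) ≠ -1 := by
      intro hh
      exact h2 (by linear_combination hh)
    rw [htrace]
    have hterm : ∀ u : {u : Finset (Fin n) // P u},
        (basCl Qf b horth hq).repr
          (((ad (eI Qf b s) ∘ₗ ad (eI Qf b s)) (w u) : Gsub Qf) : CliffordAlgebra Qf) u.1
          = if ε u.1 = -1 then 4 * cs else 0 := by
      intro u
      have hwu : ((w u : Gsub Qf) : CliffordAlgebra Qf) = eI Qf b u.1 := rfl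
      rw [LinearMap.comp_apply, key u.1 (w u) hwu, map_smul, Finsupp.smul_apply,
        hrepr_vec, if_pos rfl, smul_eq_mul, mul_one]
      rcases hε1 u.1 with h | h
      · rw [h, if_neg h1m1]
        norm_num
      · rw [h, if_pos rfl]
        norm_num
    rw [Finset.sum_congr rfl fun u _ => hterm u]
    rw [← Finset.sum_subtype (Finset.univ.filter P)
      (fun u => by simp only [Finset.mem_filter, Finset.mem_univ, true_and])
      (fun u => if ε u = -1 then 4 * cs else 0)]
    rw [← Finset.sum_filter, Finset.filter_filter, Finset.sum_const, nsmul_eq_mul]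
    have hset : {u : Finset (Fin n) | ∃ ζ : Gsub Qf,
        (ζ : CliffordAlgebra Qf) = eI Qf b u ∧
        (ad (eI Qf b s) (ad (eI Qf b s) ζ) : CliffordAlgebra Qf) ≠ 0}
        = {u : Finset (Fin n) | P u ∧ ε u = -1} := by
      ext u
      simp only [Set.mem_setOf_eq]
      constructor
      · rintro ⟨ζ, hζ, hne⟩
        have hPu : P u := by
          show eI Qf b u ∈ Gsub Qf
          rw [← hζ]
          exact ζ.2
        refine ⟨hPu, ?_⟩
        rcases hε1 u with h | h
        · exfalso
          apply hne
          rw [key u ζ hζ, h]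
          norm_num
        · exact h
      · rintro ⟨hPu, hεu⟩
        refine ⟨⟨eI Qf b u, hPu⟩, rfl, ?_⟩
        rw [key u ⟨eI Qf b u, hPu⟩ rfl, hεu]
        have h4 : ((1 - (-1 : F)) ^ 2 * cs) ≠ 0 := by
          refine mul_ne_zero ?_ hcs0
          have he : (1 - (-1 : F)) ^ 2 = 2 ^ 2 := by norm_num
          rw [he]
          exact pow_ne_zero 2 h2
        exact smul_ne_zero h4 (hEne u)
    rw [hset, Set.ncard_eq_toFinset_card', Set.toFinset_setOf]
    rw [hcs1, smul_smul, Algebra.algebraMap_eq_smul_one]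
    congr 1
    ring
end
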